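/- arXiv:2207.11204 — 3 statements merged into one kernel-verified Lean document; each statement's English description precedes it below -/
import Mathlib

section
/- Under Assumption 1, if θ := P(S₊ⁱ = 0) > 0, then for every ℓ ∈ ℕ₀ one has P(S₊ⁱ = ℓ) = θ · Σ_{i = ℓ+1}^∞ π_i, where π_i := P(Sⁱ = i | S₋ⁱ = 0); that is, the tail of the typical cluster size satisfies θ · P(Sᵗ ≥ ℓ + 1) = P(S₊ⁱ = ℓ). -/
open MeasureTheory Filter Set ENNReal

noncomputable section

namespace ClusterProofAux

abbrev XX : Type := ℤ → Bool

def cyl (F : Finset ℤ) (ε : ℤ → Bool) : Set XX := {x | ∀ t ∈ F, x t = ε t}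
def one (s : ℤ) : Set XX := {x | x s = true}
def shift (k : ℤ) (x : XX) : XX := fun t => x (t + k)
def rfl' (x : XX) : XX := fun t => x (-t)
def cnt (S : Set ℤ) (x : XX) : ℕ∞ := {t | t ∈ S ∧ x t = true}.encard

lemma measurable_shift (k : ℤ) : Measurable (shift k) :=
  measurable_pi_lambda _ fun t => measurable_pi_apply (t + k)

lemma measurable_rfl' : Measurable rfl' :=
  measurable_pi_lambda _ fun t => measurable_pi_apply (-t)

lemma measurableSet_coord (t : ℤ) (S : Set Bool) : MeasurableSet {x : XX | x t ∈ S} :=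
  measurable_pi_apply t (by trivial : MeasurableSet S)

lemma measurableSet_one (s : ℤ) : MeasurableSet (one s) :=
  measurableSet_coord s {b | b = true}

lemma measurableSet_cyl (F : Finset ℤ) (ε : ℤ → Bool) : MeasurableSet (cyl F ε) := by
  have h : cyl F ε = ⋂ t ∈ F, {x : XX | x t ∈ ({ε t} : Set Bool)} := by
    ext x; simp [cyl]
  rw [h]
  exact MeasurableSet.biInter F.countable_toSet fun t _ => measurableSet_coord t _

def cylSets : Set (Set XX) := {S | ∃ F ε, S = cyl F ε}

lemma isPiSystem_cylSets : IsPiSystem cylSets := by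
  rintro S₁ ⟨F₁, ε₁, rfl⟩ S₂ ⟨F₂, ε₂, rfl⟩ ⟨x, hx₁, hx₂⟩
  refine ⟨F₁ ∪ F₂, x, ?_⟩
  ext y
  simp only [cyl, mem_inter_iff, mem_setOf_eq, Finset.mem_union]
  constructor
  · rintro ⟨h₁, h₂⟩ t ht
    rcases ht with ht | ht
    · rw [h₁ t ht, ← hx₁ t ht]
    · rw [h₂ t ht, ← hx₂ t ht]
  · intro h
    exact ⟨fun t ht => by rw [h t (Or.inl ht), hx₁ t ht],
           fun t ht => by rw [h t (Or.inr ht), hx₂ t ht]⟩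

lemma pi_eq_generateFrom :
    (inferInstance : MeasurableSpace XX) = .generateFrom cylSets := by
  refine le_antisymm ?_ (MeasurableSpace.generateFrom_le ?_)
  · have hmeas : ∀ t : ℤ, @Measurable XX Bool (.generateFrom cylSets) _ (fun x => x t) := by
      intro t
      refine @measurable_to_countable Bool XX _ _ (.generateFrom cylSets) (fun x => x t) ?_
      intro y
      have h : (fun x : XX => x t) ⁻¹' {y t} = cyl {t} (fun _ => y t) := by
        ext z; simp [cyl]
      rw [h]
      exact MeasurableSpace.measurableSet_generateFrom ⟨{t}, fun _ => y t, rfl⟩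
    have hid : @Measurable XX XX (.generateFrom cylSets) _ id :=
      (@measurable_pi_iff XX ℤ (fun _ => Bool) (.generateFrom cylSets) _ id).mpr hmeas
    intro s hs
    simpa using hid hs
  · rintro S ⟨F, ε, rfl⟩
    exact measurableSet_cyl F ε

lemma encard_eq_coe_iff {s : Set ℤ} {k : ℕ} :
    s.encard = (k : ℕ∞) ↔ ∃ F : Finset ℤ, s = ↑F ∧ F.card = k := by
  constructor
  · intro h
    have hfin := Set.finite_of_encard_eq_coe h
    refine ⟨hfin.toFinset, hfin.coe_toFinset.symm, ?_⟩
    rw [hfin.encard_eq_coe_toFinset_card] at h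
    exact_mod_cast h
  · rintro ⟨F, rfl, rfl⟩
    exact Set.encard_coe_eq_coe_finsetCard F

lemma measurableSet_cnt_eq (S : Set ℤ) (k : ℕ) :
    MeasurableSet {x : XX | cnt S x = (k : ℕ∞)} := by
  have h : {x : XX | cnt S x = (k : ℕ∞)} =
      ⋃ (F : Finset ℤ), ⋃ (_ : F.card = k),
        ⋂ t : ℤ, {x : XX | x t ∈ {b : Bool | (t ∈ S ∧ b = true) ↔ t ∈ F}} := by
    ext x
    simp only [mem_setOf_eq, mem_iUnion, mem_iInter, cnt, encard_eq_coe_iff]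
    constructor
    · rintro ⟨F, hF, hcard⟩
      refine ⟨F, hcard, fun t => ?_⟩
      have := Set.ext_iff.mp hF t
      simpa using this
    · rintro ⟨F, hcard, hiff⟩
      refine ⟨F, ?_, hcard⟩
      ext t
      simpa using hiff t
  rw [h]
  exact MeasurableSet.iUnion fun F => MeasurableSet.iUnion fun _ =>
    MeasurableSet.iInter fun t => measurableSet_coord t _

lemma measurableSet_cnt_top (S : Set ℤ) : MeasurableSet {x : XX | cnt S x = ⊤} := by
  have h : {x : XX | cnt S x = ⊤} = (⋃ k : ℕ, {x : XX | cnt S x = (k : ℕ∞)})ᶜ := by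
    ext x
    simp only [mem_compl_iff, mem_iUnion, mem_setOf_eq]
    constructor
    · rintro h ⟨k, hk⟩
      rw [h] at hk
      exact (ENat.top_ne_coe k) hk
    · intro h
      cases hc : cnt S x with
      | top => rfl
      | coe k => exact absurd ⟨k, hc⟩ h
  rw [h]
  exact (MeasurableSet.iUnion fun k => measurableSet_cnt_eq S k).compl

lemma cnt_shift (S : Set ℤ) (k : ℤ) (x : XX) :
    cnt S (shift k x) = cnt {u | u - k ∈ S} x := by
  unfold cnt shift
  rw [← Function.Injective.encard_image (add_left_injective k)]
  congr 1
  ext u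
  simp only [mem_image, mem_setOf_eq]
  constructor
  · rintro ⟨t, ⟨htS, hxt⟩, rfl⟩
    exact ⟨by simpa using htS, hxt⟩
  · rintro ⟨hu, hxu⟩
    exact ⟨u - k, ⟨hu, by simpa using hxu⟩, by ring⟩

lemma cnt_rfl' (S : Set ℤ) (x : XX) :
    cnt S (rfl' x) = cnt {u | -u ∈ S} x := by
  unfold cnt rfl'
  rw [← Function.Injective.encard_image (neg_injective : Function.Injective (Neg.neg : ℤ → ℤ))]
  congr 1
  ext u
  simp only [mem_image, mem_setOf_eq]
  constructor
  · rintro ⟨t, ⟨htS, hxt⟩, rfl⟩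
    exact ⟨by simpa using htS, by simpa using hxt⟩
  · rintro ⟨hu, hxu⟩
    exact ⟨-u, ⟨by simpa using hu, by simpa using hxu⟩, neg_neg u⟩

lemma cnt_univ (x : XX) : cnt univ x = {t : ℤ | x t = true}.encard := by
  unfold cnt; congr 1; ext t; simp

def Ev (m : ℕ) : Set XX := {x | cnt (Set.Ioi 0) x = (m : ℕ∞)}
def Zlt (c : ℤ) : Set XX := {x | cnt (Set.Iio c) x = (0 : ℕ∞)}
def GG (m : ℕ) : Set XX :=
  Zlt 0 ∩ {x | ∃ k : ℕ, m ≤ k ∧ cnt (Set.Ioi 0) x = (k : ℕ∞)}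
def EE (m : ℕ) (s : ℤ) : Set XX := one s ∩ {x | cnt (Set.Ioi s) x = (m : ℕ∞)}
def DD (m : ℕ) (s : ℤ) : Set XX := Zlt 0 ∩ EE m s
def BB (m : ℕ) (s : ℕ) : Set XX := Ev m ∩ (one (-(s : ℤ)) ∩ Zlt (-(s : ℤ)))

lemma measurableSet_Ev (m : ℕ) : MeasurableSet (Ev m) := measurableSet_cnt_eq _ m
lemma measurableSet_Zlt (c : ℤ) : MeasurableSet (Zlt c) := measurableSet_cnt_eq _ 0
lemma measurableSet_GG (m : ℕ) : MeasurableSet (GG m) := by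
  refine (measurableSet_Zlt 0).inter ?_
  have h : {x : XX | ∃ k : ℕ, m ≤ k ∧ cnt (Set.Ioi 0) x = (k : ℕ∞)} =
      ⋃ (k : ℕ), ⋃ (_ : m ≤ k), {x : XX | cnt (Set.Ioi 0) x = (k : ℕ∞)} := by
    ext x; simp
  rw [h]
  exact MeasurableSet.iUnion fun k => MeasurableSet.iUnion fun _ => measurableSet_cnt_eq _ k
lemma measurableSet_EE (m : ℕ) (s : ℤ) : MeasurableSet (EE m s) :=
  (measurableSet_one s).inter (measurableSet_cnt_eq _ m)
lemma measurableSet_DD (m : ℕ) (s : ℤ) : MeasurableSet (DD m s) :=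
  (measurableSet_Zlt 0).inter (measurableSet_EE m s)
lemma measurableSet_BB (m : ℕ) (s : ℕ) : MeasurableSet (BB m s) :=
  (measurableSet_Ev m).inter ((measurableSet_one _).inter (measurableSet_Zlt _))

lemma mem_Zlt {c : ℤ} {x : XX} : x ∈ Zlt c ↔ ∀ t < c, x t = false := by
  simp only [Zlt, mem_setOf_eq, cnt, Set.encard_eq_zero, Set.eq_empty_iff_forall_notMem,
    mem_setOf_eq, Set.mem_Iio, not_and]
  constructor
  · intro h t ht
    have := h t ht
    simpa using this
  · intro h t ht
    simp [h t ht]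

lemma shiftIoi (a k : ℤ) : {u : ℤ | u - k ∈ Set.Ioi a} = Set.Ioi (a + k) := by
  ext u; simp only [mem_setOf_eq, Set.mem_Ioi]; omega

lemma shiftIio (a k : ℤ) : {u : ℤ | u - k ∈ Set.Iio a} = Set.Iio (a + k) := by
  ext u; simp only [mem_setOf_eq, Set.mem_Iio]; omega

lemma pre_cnt_Ioi (m : ℕ) (a k : ℤ) :
    shift k ⁻¹' {x : XX | cnt (Set.Ioi a) x = (m : ℕ∞)}
      = {x : XX | cnt (Set.Ioi (a + k)) x = (m : ℕ∞)} := by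
  ext x
  simp only [mem_preimage, mem_setOf_eq, cnt_shift, shiftIoi]

lemma pre_Zlt (c k : ℤ) : shift k ⁻¹' Zlt c = Zlt (c + k) := by
  ext x
  simp only [Zlt, mem_preimage, mem_setOf_eq, cnt_shift, shiftIio]

lemma EE_disjoint (m : ℕ) : Pairwise (Function.onFun Disjoint (EE m)) := by
  have key : ∀ s s' : ℤ, s < s' → ∀ x : XX, x ∈ EE m s → x ∈ EE m s' → False := by
    rintro s s' hss x ⟨hxs, hc⟩ ⟨hxs', hc'⟩
    have hnotmem : s' ∉ {t : ℤ | t ∈ Set.Ioi s' ∧ x t = true} := by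
      simp [Set.mem_Ioi]
    have hsub : insert s' {t : ℤ | t ∈ Set.Ioi s' ∧ x t = true}
        ⊆ {t : ℤ | t ∈ Set.Ioi s ∧ x t = true} := by
      rintro t ht
      rcases Set.mem_insert_iff.mp ht with rfl | ⟨h1, h2⟩
      · exact ⟨Set.mem_Ioi.mpr hss, hxs'⟩
      · exact ⟨Set.mem_Ioi.mpr (lt_trans hss (Set.mem_Ioi.mp h1)), h2⟩
    have h1 : ((m : ℕ∞) + 1) ≤ (m : ℕ∞) := by
      calc (m : ℕ∞) + 1 = (insert s' {t : ℤ | t ∈ Set.Ioi s' ∧ x t = true}).encard := by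
            rw [Set.encard_insert_of_notMem hnotmem]
            rw [show {t : ℤ | t ∈ Set.Ioi s' ∧ x t = true}.encard = (m : ℕ∞) from hc']
        _ ≤ {t : ℤ | t ∈ Set.Ioi s ∧ x t = true}.encard := Set.encard_mono hsub
        _ = (m : ℕ∞) := hc
    have h2 : ((m + 1 : ℕ) : ℕ∞) ≤ ((m : ℕ) : ℕ∞) := by push_cast; exact h1
    exact absurd (by exact_mod_cast h2) (Nat.not_succ_le_self m)
  intro s s' hne
  rcases lt_or_gt_of_ne hne with h | h
  · exact Set.disjoint_left.mpr fun x hx hx' => key s s' h x hx hx'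
  · exact Set.disjoint_left.mpr fun x hx hx' => key s' s h x hx' hx

lemma exists_cut (j : ℕ) : ∀ A : Finset ℤ, j < A.card →
    ∃ s ∈ A, (A.filter (fun t => s < t)).card = j := by
  induction j with
  | zero =>
    intro A hA
    have hne : A.Nonempty := Finset.card_pos.mp hA
    refine ⟨A.max' hne, A.max'_mem hne, ?_⟩
    rw [Finset.card_eq_zero]
    apply Finset.filter_eq_empty_iff.mpr
    intro t ht
    exact not_lt.mpr (A.le_max' t ht)
  | succ j ih =>
    intro A hA
    have hne : A.Nonempty := Finset.card_pos.mp (by omega)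
    set M := A.max' hne with hM
    have hMA : M ∈ A := A.max'_mem hne
    have hcard : j < (A.erase M).card := by
      rw [Finset.card_erase_of_mem hMA]; omega
    obtain ⟨s, hs, hcount⟩ := ih (A.erase M) hcard
    have hsA : s ∈ A := Finset.mem_of_mem_erase hs
    have hsM : s < M := lt_of_le_of_ne (A.le_max' s hsA) (Finset.ne_of_mem_erase hs)
    have hfil : A.filter (fun t => s < t)
        = insert M ((A.erase M).filter (fun t => s < t)) := by
      ext t
      simp only [Finset.mem_filter, Finset.mem_insert, Finset.mem_erase]
      constructor
      · rintro ⟨htA, hst⟩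
        by_cases htM : t = M
        · exact Or.inl htM
        · exact Or.inr ⟨⟨htM, htA⟩, hst⟩
      · rintro (rfl | ⟨⟨_, htA⟩, hst⟩)
        · exact ⟨hMA, hsM⟩
        · exact ⟨htA, hst⟩
    exact ⟨s, hsA, by rw [hfil, Finset.card_insert_of_notMem (by simp), hcount]⟩

lemma BB_disjoint (m : ℕ) : Pairwise (Function.onFun Disjoint (BB m)) := by
  have key : ∀ s s' : ℕ, s < s' → ∀ x : XX, x ∈ BB m s → x ∈ BB m s' → False := by
    rintro s s' hss x ⟨_, hxs, hZ⟩ ⟨_, hxs', _⟩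
    have h1 : x (-(s' : ℤ)) = false := mem_Zlt.mp hZ _ (by exact_mod_cast by omega)
    have h2 : x (-(s' : ℤ)) = true := hxs'
    rw [h1] at h2
    exact Bool.false_ne_true h2
  intro s s' hne
  rcases lt_or_gt_of_ne hne with h | h
  · exact Set.disjoint_left.mpr fun x hx hx' => key s s' h x hx hx'
  · exact Set.disjoint_left.mpr fun x hx hx' => key s' s h x hx' hx

lemma E1 (μ : Measure XX) [IsProbabilityMeasure μ]
    (hsh : ∀ (s : ℤ) (A : Set XX), MeasurableSet A →
      μ (shift s ⁻¹' A ∩ one s) = μ (A ∩ one (-s)))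
    (h0 : μ (one 0) = 1) (m : ℕ) :
    μ (Ev m) = μ (GG m) := by
  classical
  have hone0c : μ (one 0)ᶜ = 0 := by
    have h := measure_compl (measurableSet_one 0) (measure_ne_top μ _)
    rw [h0, measure_univ] at h
    simpa using h
  have hins : ∀ A : Set XX, μ (A ∩ one 0) = μ A :=
    fun A => measure_inter_conull hone0c
  -- μ (BB m s) = μ (DD m s)
  have hBD : ∀ s : ℕ, μ (BB m s) = μ (DD m (s : ℤ)) := by
    intro s
    set C : Set XX := Zlt 0 ∩ {x | cnt (Set.Ioi (s : ℤ)) x = (m : ℕ∞)} with hC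
    have hCmeas : MeasurableSet C := (measurableSet_Zlt 0).inter (measurableSet_cnt_eq _ m)
    have hpre : shift (-(s : ℤ)) ⁻¹' C ∩ one (-(s : ℤ)) = BB m s := by
      rw [hC, preimage_inter, pre_Zlt, pre_cnt_Ioi]
      have e1 : (0 : ℤ) + -(s : ℤ) = -(s : ℤ) := by ring
      have e2 : (s : ℤ) + -(s : ℤ) = 0 := by ring
      rw [e1, e2]
      ext x
      simp only [BB, Ev, mem_inter_iff, mem_setOf_eq]
      tauto
    have h := hsh (-(s : ℤ)) C hCmeas
    rw [hpre, neg_neg] at h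
    rw [h]
    have e : C ∩ one (s : ℤ) = DD m (s : ℤ) := by
      ext x
      simp only [hC, DD, EE, mem_inter_iff, mem_setOf_eq]
      tauto
    rw [e]
  -- tail sums
  set q : ℕ → ℝ≥0∞ := fun s => μ (Ev m ∩ one (-(s : ℤ) - 1)) with hq
  have hq_eq : ∀ s : ℕ, q s = μ (EE m ((s : ℤ) + 1)) := by
    intro s
    have h := hsh ((s : ℤ) + 1) (Ev m) (measurableSet_Ev m)
    have hpre : shift ((s : ℤ) + 1) ⁻¹' Ev m ∩ one ((s : ℤ) + 1) = EE m ((s : ℤ) + 1) := by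
      have : shift ((s : ℤ) + 1) ⁻¹' Ev m
          = {x : XX | cnt (Set.Ioi ((s : ℤ) + 1)) x = (m : ℕ∞)} := by
        have := pre_cnt_Ioi m 0 ((s : ℤ) + 1)
        rw [zero_add] at this
        exact this
      rw [this]
      ext x
      simp only [EE, mem_inter_iff, mem_setOf_eq]
      tauto
    rw [hpre] at h
    have e : -((s : ℤ) + 1) = -(s : ℤ) - 1 := by ring
    rw [e] at h
    rw [hq]
    exact h.symm
  have hEdisj : Pairwise (Function.onFun Disjoint (fun s : ℕ => EE m ((s : ℤ) + 1))) := by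
    intro a b hab
    exact EE_disjoint m (by exact_mod_cast by omega : ((a : ℤ) + 1) ≠ ((b : ℤ) + 1))
  have hqsum : ∑' s : ℕ, q s ≠ ⊤ := by
    have h1 : ∑' s : ℕ, q s = μ (⋃ s : ℕ, EE m ((s : ℤ) + 1)) := by
      rw [measure_iUnion hEdisj fun s => measurableSet_EE m _]
      exact tsum_congr hq_eq
    rw [h1]
    exact (measure_lt_top μ _).ne
  -- the infinite part is null
  have hBinf : μ (Ev m ∩ {x | cnt (Set.Iio 0) x = ⊤}) = 0 := by
    refine le_antisymm ?_ (zero_le)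
    have hb : ∀ N : ℕ, μ (Ev m ∩ {x | cnt (Set.Iio 0) x = ⊤}) ≤ ∑' i : ℕ, q (i + N) := by
      intro N
      have hsub : Ev m ∩ {x | cnt (Set.Iio 0) x = ⊤}
          ⊆ ⋃ i : ℕ, (Ev m ∩ one (-((i + N : ℕ) : ℤ) - 1)) := by
        rintro x ⟨hEv, htop⟩
        have hinf : {t : ℤ | t ∈ Set.Iio 0 ∧ x t = true}.Infinite := by
          by_contra hfin
          rw [not_infinite] at hfin
          have htop' : {t : ℤ | t ∈ Set.Iio 0 ∧ x t = true}.encard = ⊤ := htop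
          rw [hfin.encard_eq_coe_toFinset_card] at htop'
          exact (ENat.coe_ne_top _) htop'
        obtain ⟨t, ht, htN⟩ : ∃ t : ℤ, (t ∈ Set.Iio 0 ∧ x t = true) ∧ t < -(N : ℤ) := by
          by_contra hcon
          push_neg at hcon
          refine hinf (Set.Finite.subset (Set.finite_Icc (-(N : ℤ)) 0) ?_)
          rintro t ⟨ht1, ht2⟩
          exact ⟨hcon t ⟨ht1, ht2⟩, le_of_lt ht1⟩
        set i : ℕ := (-t - (N : ℤ) - 1).toNat with hi
        have hicast : (i : ℤ) = -t - (N : ℤ) - 1 := Int.toNat_of_nonneg (by omega)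
        refine mem_iUnion.mpr ⟨i, hEv, ?_⟩
        show x (-(((i + N : ℕ) : ℤ)) - 1) = true
        have harg : (-(((i + N : ℕ) : ℤ)) - 1) = t := by push_cast; omega
        rw [harg]
        exact ht.2
      calc μ (Ev m ∩ {x | cnt (Set.Iio 0) x = ⊤})
          ≤ μ (⋃ i : ℕ, (Ev m ∩ one (-((i + N : ℕ) : ℤ) - 1))) := measure_mono hsub
        _ ≤ ∑' i : ℕ, μ (Ev m ∩ one (-((i + N : ℕ) : ℤ) - 1)) := measure_iUnion_le _
        _ = ∑' i : ℕ, q (i + N) := by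
            refine tsum_congr fun i => ?_
            rw [hq]
    exact ge_of_tendsto' (ENNReal.tendsto_sum_nat_add q hqsum) hb
  -- decomposition
  have hdecomp : Ev m ∩ one 0 =
      (⋃ s : ℕ, (BB m s ∩ one 0)) ∪ ((Ev m ∩ {x | cnt (Set.Iio 0) x = ⊤}) ∩ one 0) := by
    ext x
    constructor
    · rintro ⟨hEv, hx0⟩
      by_cases hfin : {t : ℤ | t ∈ Set.Iio 0 ∧ x t = true}.Finite
      · left
        set M : Finset ℤ := insert 0 hfin.toFinset with hMdef
        have hMne : M.Nonempty := ⟨0, Finset.mem_insert_self _ _⟩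
        set mn := M.min' hMne with hmn
        have hmle : mn ≤ 0 := Finset.min'_le M 0 (Finset.mem_insert_self _ _)
        have hxm : x mn = true := by
          have hmem : mn ∈ M := by rw [hmn]; exact M.min'_mem hMne
          rw [hMdef] at hmem
          rcases Finset.mem_insert.mp hmem with h | h
          · rw [h]; exact hx0
          · exact ((Set.Finite.mem_toFinset _).mp h).2
        have hbelow : ∀ t < mn, x t = false := by
          intro t ht
          by_contra hxt
          have hxt' : x t = true := by
            revert hxt; cases x t <;> simp
          have htM : t ∈ M := by
            rw [hMdef]
            exact Finset.mem_insert_of_mem ((Set.Finite.mem_toFinset _).mpr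
              ⟨Set.mem_Iio.mpr (lt_of_lt_of_le ht hmle), hxt'⟩)
          exact absurd (Finset.min'_le M t htM) (not_le.mpr ht)
        have hcast : -(((-mn).toNat : ℤ)) = mn := by
          rw [Int.toNat_of_nonneg (by omega)]; ring
        refine mem_iUnion.mpr ⟨(-mn).toNat, ⟨hEv, ?_, ?_⟩, hx0⟩
        · show x (-(((-mn).toNat : ℤ))) = true
          rw [hcast]; exact hxm
        · refine mem_Zlt.mpr ?_
          rw [hcast]
          exact hbelow
      · right
        exact ⟨⟨hEv, Set.Infinite.encard_eq hfin⟩, hx0⟩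
    · rintro (hx | hx)
      · obtain ⟨s, hs⟩ := mem_iUnion.mp hx
        exact ⟨hs.1.1, hs.2⟩
      · exact ⟨hx.1.1, hx.2⟩
  -- union of the DD's
  have hDU : (⋃ s : ℕ, (DD m (s : ℤ) ∩ one 0)) = GG m ∩ one 0 := by
    ext x
    constructor
    · intro hx
      obtain ⟨s, ⟨hZ, hxs, hcnt⟩, hx0⟩ := mem_iUnion.mp hx
      refine ⟨⟨hZ, ?_⟩, hx0⟩
      have hfin2 : {t : ℤ | t ∈ Set.Ioi (0 : ℤ) ∧ x t = true}.Finite := by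
        refine Set.Finite.subset ((Set.finite_Icc 1 (s : ℤ)).union
          (Set.finite_of_encard_eq_coe hcnt)) ?_
        rintro t ⟨ht0, hxt⟩
        rcases le_or_gt t (s : ℤ) with h | h
        · exact Or.inl ⟨Set.mem_Ioi.mp ht0, h⟩
        · exact Or.inr ⟨Set.mem_Ioi.mpr h, hxt⟩
      refine ⟨hfin2.toFinset.card, ?_, hfin2.encard_eq_coe_toFinset_card⟩
      have hsub : {t : ℤ | t ∈ Set.Ioi (s : ℤ) ∧ x t = true}
          ⊆ {t : ℤ | t ∈ Set.Ioi (0 : ℤ) ∧ x t = true} := by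
        rintro t ⟨ht1, ht2⟩
        exact ⟨Set.mem_Ioi.mpr (lt_of_le_of_lt (by positivity) (Set.mem_Ioi.mp ht1)), ht2⟩
      have hle : (m : ℕ∞) ≤ (hfin2.toFinset.card : ℕ∞) := by
        rw [← hcnt, ← hfin2.encard_eq_coe_toFinset_card]
        exact Set.encard_mono hsub
      exact_mod_cast hle
    · rintro ⟨⟨hZ, k, hk, hcnt⟩, hx0⟩
      have hfin : {t : ℤ | t ∈ Set.Ioi (0 : ℤ) ∧ x t = true}.Finite :=
        Set.finite_of_encard_eq_coe hcnt
      have hWfin : (insert (0 : ℤ) {t : ℤ | t ∈ Set.Ioi (0 : ℤ) ∧ x t = true}).Finite :=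
        hfin.insert 0
      set A : Finset ℤ := hWfin.toFinset with hA
      have hAcard : A.card = k + 1 := by
        have h1 : (insert (0 : ℤ) {t : ℤ | t ∈ Set.Ioi (0 : ℤ) ∧ x t = true}).encard
            = (k : ℕ∞) + 1 := by
          rw [Set.encard_insert_of_notMem (by simp),
            show {t : ℤ | t ∈ Set.Ioi (0 : ℤ) ∧ x t = true}.encard = (k : ℕ∞) from hcnt]
        rw [hWfin.encard_eq_coe_toFinset_card] at h1
        have h2 : ((A.card : ℕ) : ℕ∞) = ((k + 1 : ℕ) : ℕ∞) := by
          rw [h1]; push_cast; ring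
        exact_mod_cast h2
      obtain ⟨s, hsA, hscut⟩ := exists_cut m A (by omega)
      have hsW : s ∈ insert (0 : ℤ) {t : ℤ | t ∈ Set.Ioi (0 : ℤ) ∧ x t = true} :=
        hWfin.mem_toFinset.mp hsA
      have hs0 : 0 ≤ s := by
        rcases Set.mem_insert_iff.mp hsW with rfl | ⟨h, _⟩
        · exact le_refl 0
        · exact le_of_lt (Set.mem_Ioi.mp h)
      have hxs : x s = true := by
        rcases Set.mem_insert_iff.mp hsW with rfl | ⟨_, h⟩
        · exact hx0
        · exact h
      have hset : {t : ℤ | t ∈ Set.Ioi s ∧ x t = true} = ↑(A.filter (fun t => s < t)) := by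
        ext t
        simp only [Finset.coe_filter, Finset.mem_coe, mem_setOf_eq, hA, Set.Finite.mem_toFinset, Set.mem_insert_iff,
          Set.mem_Ioi]
        constructor
        · rintro ⟨hst, hxt⟩
          exact ⟨Or.inr ⟨by omega, hxt⟩, hst⟩
        · rintro ⟨ht, hst⟩
          refine ⟨hst, ?_⟩
          rcases ht with rfl | ⟨_, h⟩
          · exact hx0
          · exact h
      have hcnt2 : cnt (Set.Ioi s) x = (m : ℕ∞) := by
        unfold cnt
        rw [hset, Set.encard_coe_eq_coe_finsetCard, hscut]
      have hcast : ((s.toNat : ℤ)) = s := Int.toNat_of_nonneg hs0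
      refine mem_iUnion.mpr ⟨s.toNat, ⟨⟨hZ, ?_, ?_⟩, hx0⟩⟩
      · show x ((s.toNat : ℤ)) = true
        rw [hcast]; exact hxs
      · show cnt (Set.Ioi ((s.toNat : ℤ))) x = (m : ℕ∞)
        rw [hcast]; exact hcnt2
  -- assemble
  have hDdisj : Pairwise (Function.onFun Disjoint (fun s : ℕ => DD m (s : ℤ) ∩ one 0)) := by
    intro a b hab
    have h := EE_disjoint m (show ((a : ℤ)) ≠ ((b : ℤ)) by exact_mod_cast hab)
    exact Disjoint.mono (fun x hx => hx.1.2) (fun x hx => hx.1.2) h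
  have hBdisj : Pairwise (Function.onFun Disjoint (fun s : ℕ => BB m s ∩ one 0)) := by
    intro a b hab
    exact Disjoint.mono inter_subset_left inter_subset_left (BB_disjoint m hab)
  calc μ (Ev m) = μ (Ev m ∩ one 0) := (hins _).symm
    _ = μ ((⋃ s : ℕ, (BB m s ∩ one 0)) ∪ ((Ev m ∩ {x | cnt (Set.Iio 0) x = ⊤}) ∩ one 0)) := by
        rw [hdecomp]
    _ = μ (⋃ s : ℕ, (BB m s ∩ one 0)) := by
        have hnull : μ ((Ev m ∩ {x | cnt (Set.Iio 0) x = ⊤}) ∩ one 0) = 0 :=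
          measure_mono_null inter_subset_left hBinf
        refine le_antisymm ?_ (measure_mono subset_union_left)
        calc μ ((⋃ s : ℕ, (BB m s ∩ one 0)) ∪ ((Ev m ∩ {x | cnt (Set.Iio 0) x = ⊤}) ∩ one 0))
            ≤ μ (⋃ s : ℕ, (BB m s ∩ one 0))
              + μ ((Ev m ∩ {x | cnt (Set.Iio 0) x = ⊤}) ∩ one 0) := measure_union_le _ _
          _ = μ (⋃ s : ℕ, (BB m s ∩ one 0)) := by rw [hnull, add_zero]
    _ = ∑' s : ℕ, μ (BB m s ∩ one 0) :=
        measure_iUnion hBdisj fun s => (measurableSet_BB m s).inter (measurableSet_one 0)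
    _ = ∑' s : ℕ, μ (DD m (s : ℤ) ∩ one 0) := by
        refine tsum_congr fun s => ?_
        rw [hins, hins, hBD]
    _ = μ (⋃ s : ℕ, (DD m (s : ℤ) ∩ one 0)) :=
        (measure_iUnion hDdisj fun s => (measurableSet_DD m _).inter (measurableSet_one 0)).symm
    _ = μ (GG m ∩ one 0) := by rw [hDU]
    _ = μ (GG m) := hins _

lemma rfl'_pre_one (s : ℤ) : rfl' ⁻¹' one s = one (-s) := rfl

lemma rfl'_pre_cntIoi (m : ℕ) :
    rfl' ⁻¹' {x : XX | cnt (Set.Ioi 0) x = (m : ℕ∞)} = {x : XX | cnt (Set.Iio 0) x = (m : ℕ∞)} := by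
  ext x
  simp only [mem_preimage, mem_setOf_eq, cnt_rfl']
  rw [show {u : ℤ | -u ∈ Set.Ioi (0 : ℤ)} = Set.Iio 0 from by ext u; simp [Set.mem_Iio]]

lemma rfl'_pre_cntIio (m : ℕ) :
    rfl' ⁻¹' {x : XX | cnt (Set.Iio 0) x = (m : ℕ∞)} = {x : XX | cnt (Set.Ioi 0) x = (m : ℕ∞)} := by
  ext x
  simp only [mem_preimage, mem_setOf_eq, cnt_rfl']
  rw [show {u : ℤ | -u ∈ Set.Iio (0 : ℤ)} = Set.Ioi 0 from by ext u; simp [Set.mem_Ioi]]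


lemma rfl'_pre_Ev0 : rfl' ⁻¹' Ev 0 = Zlt 0 := by
  ext x
  simp only [Ev, Zlt, mem_preimage, mem_setOf_eq, cnt_rfl', Nat.cast_zero]
  rw [show {u : ℤ | -u ∈ Set.Ioi (0 : ℤ)} = Set.Iio 0 from by ext u; simp [Set.mem_Iio]]

lemma rfl'_pre_Zlt0 : rfl' ⁻¹' Zlt 0 = Ev 0 := by
  ext x
  simp only [Ev, Zlt, mem_preimage, mem_setOf_eq, cnt_rfl', Nat.cast_zero]
  rw [show {u : ℤ | -u ∈ Set.Iio (0 : ℤ)} = Set.Ioi 0 from by ext u; simp [Set.mem_Ioi]]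

end ClusterProofAux

open ClusterProofAux

/-- The cluster `C(ω) = {t : I_t(ω) = 1}` of a binary process. -/
def clusterSet {Ω : Type*} (I : ℤ → Ω → Bool) (ω : Ω) : Set ℤ :=
  {t : ℤ | I t ω = true}

/-- Inspected cluster size `Sⁱ(ω) = Σ_{t ∈ ℤ} I_t(ω) ∈ ℕ ∪ {∞}`. -/
def SiFn {Ω : Type*} (I : ℤ → Ω → Bool) (ω : Ω) : ℕ∞ :=
  {t : ℤ | I t ω = true}.encard

/-- Forward inspected cluster size `S₊ⁱ(ω) = Σ_{t ≥ 1} I_t(ω) ∈ ℕ₀ ∪ {∞}`. -/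
def SplusFn {Ω : Type*} (I : ℤ → Ω → Bool) (ω : Ω) : ℕ∞ :=
  {t : ℤ | 0 < t ∧ I t ω = true}.encard

/-- Backward inspected cluster size `S₋ⁱ(ω) = Σ_{t ≤ -1} I_t(ω) ∈ ℕ₀ ∪ {∞}`. -/
def SminusFn {Ω : Type*} (I : ℤ → Ω → Bool) (ω : Ω) : ℕ∞ :=
  {t : ℤ | t < 0 ∧ I t ω = true}.encard

/-- Proposition 4.1, Equation (4.6): under Assumption 1, if `θ = P(S₊ⁱ = 0) > 0`,
then for every `ℓ ∈ ℕ₀`, `P(S₊ⁱ = ℓ) = θ · Σ_{i = ℓ+1}^∞ π_i`, i.e. the tail of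
the typical cluster size satisfies `θ · P(Sᵗ ≥ ℓ + 1) = P(S₊ⁱ = ℓ)`. -/
theorem forward_size_from_typical_cluster
    {Ω : Type*} [MeasurableSpace Ω] (P : Measure Ω) [IsProbabilityMeasure P]
    (I : ℤ → Ω → Bool) (hI : ∀ t, Measurable (I t))
    {Ωn : ℕ → Type*} [∀ n, MeasurableSpace (Ωn n)]
    (Pn : ∀ n, Measure (Ωn n)) (hPn : ∀ n, IsProbabilityMeasure (Pn n))
    (In : ∀ n, ℤ → Ωn n → Bool) (hIn : ∀ n t, Measurable (In n t))
    -- `P(I₀ⁿ = 1) > 0` for all `n`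
    (hpos : ∀ n, 0 < Pn n {ω | In n 0 ω = true})
    -- stationarity of each `(Iₜⁿ)ₜ`
    (hstat : ∀ n (F : Finset ℤ) (ε : ℤ → Bool) (k : ℤ),
      Pn n {ω | ∀ t ∈ F, In n t ω = ε t} = Pn n {ω | ∀ t ∈ F, In n (t + k) ω = ε t})
    -- convergence of the conditional finite-dimensional distributions
    (hconv : ∀ (F : Finset ℤ) (ε : ℤ → Bool),
      Tendsto (fun n =>
          Pn n ({ω | ∀ t ∈ F, In n t ω = ε t} ∩ {ω | In n 0 ω = true})
            / Pn n {ω | In n 0 ω = true}) atTop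
        (nhds (P {ω | ∀ t ∈ F, I t ω = ε t})))

    (hθ : 0 < P {ω | SplusFn I ω = 0}) (l : ℕ) :
    P {ω | SplusFn I ω = (l : ℕ∞)}
      = (P {ω | SplusFn I ω = 0}) * ∑' i : ℕ, P ({ω | SiFn I ω = ((l + 1 + i : ℕ) : ℕ∞)} ∩ {ω | SminusFn I ω = 0}) / P {ω | SminusFn I ω = 0} := by
  classical
  set φ : Ω → XX := fun ω t => I t ω with hφdef
  have hφ : Measurable φ := measurable_pi_lambda _ fun t => hI t
  set μ : Measure XX := P.map φ with hμdef
  haveI hμprob : IsProbabilityMeasure μ := Measure.isProbabilityMeasure_map hφ.aemeasurable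
  have hmap : ∀ A : Set XX, MeasurableSet A → μ A = P (φ ⁻¹' A) := fun A hA =>
    Measure.map_apply hφ hA
  have hcylP : ∀ F ε, μ (cyl F ε) = P {ω | ∀ t ∈ F, I t ω = ε t} := by
    intro F ε
    rw [hmap _ (measurableSet_cyl F ε)]
    rfl
  -- `I 0 = 1` a.s.
  have hI0 : P {ω | I 0 ω = true} = 1 := by
    have h1 := hconv {0} (fun _ => true)
    have h2 : ∀ n : ℕ,
        Pn n ({ω | ∀ t ∈ ({0} : Finset ℤ), In n t ω = true}
          ∩ {ω | In n 0 ω = true}) / Pn n {ω | In n 0 ω = true} = (1 : ℝ≥0∞) := by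
      intro n
      haveI := hPn n
      have hset : {ω | ∀ t ∈ ({0} : Finset ℤ), In n t ω = true}
          = {ω | In n 0 ω = true} := by
        ext ω; simp
      rw [hset, inter_self]
      exact ENNReal.div_self (hpos n).ne' (measure_ne_top _ _)
    have h1' := (Filter.tendsto_congr h2).mp h1
    have h3 := tendsto_nhds_unique h1' tendsto_const_nhds
    have hset : {ω | ∀ t ∈ ({0} : Finset ℤ), I t ω = true}
        = {ω | I 0 ω = true} := by
      ext ω; simp
    rw [← hset]
    exact h3
  have hone0 : μ (one 0) = 1 := by
    rw [hmap _ (measurableSet_one 0)]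
    exact hI0
  have hone0c : μ (one 0)ᶜ = 0 := by
    have h := measure_compl (measurableSet_one 0) (measure_ne_top μ _)
    rw [hone0, measure_univ] at h
    simpa using h
  have hins : ∀ A : Set XX, μ (A ∩ one 0) = μ A :=
    fun A => measure_inter_conull hone0c
  -- key identity on cylinders
  have hkey_cyl : ∀ (s : ℤ) (G : Finset ℤ) (εR : ℤ → Bool), (-s) ∈ G → (0 : ℤ) ∈ G →
      εR (-s) = true → εR 0 = true →
      P {ω | ∀ t ∈ G.image (· + s), I t ω = εR (t - s)} = P {ω | ∀ t ∈ G, I t ω = εR t} := by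
    intro s G εR hmsG h0G hεms hε0
    have hn : ∀ n : ℕ,
        Pn n ({ω | ∀ t ∈ G.image (· + s), In n t ω = εR (t - s)}
          ∩ {ω | In n 0 ω = true}) / Pn n {ω | In n 0 ω = true}
        = Pn n ({ω | ∀ t ∈ G, In n t ω = εR t}
          ∩ {ω | In n 0 ω = true}) / Pn n {ω | In n 0 ω = true} := by
      intro n
      have e1 : {ω | ∀ t ∈ G.image (· + s), In n t ω = εR (t - s)}
          ∩ {ω | In n 0 ω = true}
          = {ω | ∀ t ∈ G.image (· + s), In n t ω = εR (t - s)} := by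
        refine inter_eq_left.mpr ?_
        intro ω hω
        have h0img : (0 : ℤ) ∈ G.image (· + s) := Finset.mem_image.mpr ⟨-s, hmsG, by ring⟩
        have h := hω 0 h0img
        rw [zero_sub, hεms] at h
        exact h
      have e2 : {ω | ∀ t ∈ G, In n t ω = εR t} ∩ {ω | In n 0 ω = true}
          = {ω | ∀ t ∈ G, In n t ω = εR t} := by
        refine inter_eq_left.mpr ?_
        intro ω hω
        have h := hω 0 h0G
        rw [hε0] at h
        exact h
      rw [e1, e2]
      have e3 : {ω | ∀ t ∈ G, In n (t + s) ω = εR t}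
          = {ω | ∀ t ∈ G.image (· + s), In n t ω = εR (t - s)} := by
        ext ω
        simp only [mem_setOf_eq]
        constructor
        · rintro h t ht
          obtain ⟨u, huG, rfl⟩ := Finset.mem_image.mp ht
          rw [add_sub_cancel_right]
          exact h u huG
        · intro h t htG
          have := h (t + s) (Finset.mem_image.mpr ⟨t, htG, rfl⟩)
          rwa [add_sub_cancel_right] at this
      rw [← e3, ← hstat n G εR s]
    have h1 := (Filter.tendsto_congr hn).mp (hconv (G.image (· + s)) (fun t => εR (t - s)))
    exact tendsto_nhds_unique h1 (hconv G εR)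
  -- the shift-exchange identity for μ
  have hsh : ∀ (s : ℤ) (A : Set XX), MeasurableSet A →
      μ (shift s ⁻¹' A ∩ one s) = μ (A ∩ one (-s)) := by
    intro s A hA
    have hext : ∀ B : Set XX, MeasurableSet B →
        μ (shift s ⁻¹' B ∩ (one s ∩ one 0)) = μ (B ∩ (one (-s) ∩ one 0)) := by
      have hK1 : MeasurableSet (one s ∩ one 0) :=
        (measurableSet_one s).inter (measurableSet_one 0)
      have hK2 : MeasurableSet (one (-s) ∩ one 0) :=
        (measurableSet_one (-s)).inter (measurableSet_one 0)
      set ν₁ : Measure XX := (μ.restrict (one s ∩ one 0)).map (shift s) with hν₁def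
      set ν₂ : Measure XX := μ.restrict (one (-s) ∩ one 0) with hν₂def
      have hν₁ : ∀ B : Set XX, MeasurableSet B → ν₁ B = μ (shift s ⁻¹' B ∩ (one s ∩ one 0)) := by
        intro B hB
        rw [hν₁def, Measure.map_apply (measurable_shift s) hB,
          Measure.restrict_apply (measurable_shift s hB)]
      have hν₂ : ∀ B : Set XX, MeasurableSet B → ν₂ B = μ (B ∩ (one (-s) ∩ one 0)) := by
        intro B hB
        rw [hν₂def, Measure.restrict_apply hB]
      haveI : IsFiniteMeasure ν₁ := by
        constructor
        rw [hν₁ univ MeasurableSet.univ]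
        exact measure_lt_top μ _
      have hcylagree : ∀ S ∈ cylSets, ν₁ S = ν₂ S := by
        rintro S ⟨F, ε, rfl⟩
        rw [hν₁ _ (measurableSet_cyl F ε), hν₂ _ (measurableSet_cyl F ε)]
        by_cases hb : ((0 : ℤ) ∈ F ∧ ε 0 = false) ∨ ((-s) ∈ F ∧ ε (-s) = false)
        · have hL : shift s ⁻¹' cyl F ε ∩ (one s ∩ one 0) = ∅ := by
            rcases hb with ⟨h0F, hε0⟩ | ⟨hsF, hεs⟩
            · ext x
              simp only [mem_empty_iff_false, iff_false]
              rintro ⟨hc, hxs, hx0⟩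
              have h : shift s x 0 = ε 0 := hc 0 h0F
              rw [hε0] at h
              have h' : x s = false := by
                have h2 : x (0 + s) = false := h
                rwa [zero_add] at h2
              rw [show x s = true from hxs] at h'
              exact absurd h' (by simp)
            · ext x
              simp only [mem_empty_iff_false, iff_false]
              rintro ⟨hc, hxs, hx0⟩
              have h : shift s x (-s) = ε (-s) := hc (-s) hsF
              rw [hεs] at h
              have h' : x 0 = false := by
                have h2 : x (-s + s) = false := h
                rwa [neg_add_cancel] at h2
              rw [show x 0 = true from hx0] at h'
              exact absurd h' (by simp)
          have hR : cyl F ε ∩ (one (-s) ∩ one 0) = ∅ := by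
            rcases hb with ⟨h0F, hε0⟩ | ⟨hsF, hεs⟩
            · ext x
              simp only [mem_empty_iff_false, iff_false]
              rintro ⟨hc, hxs, hx0⟩
              have h : x 0 = ε 0 := hc 0 h0F
              rw [hε0] at h
              rw [show x 0 = true from hx0] at h
              exact absurd h (by simp)
            · ext x
              simp only [mem_empty_iff_false, iff_false]
              rintro ⟨hc, hxs, hx0⟩
              have h : x (-s) = ε (-s) := hc (-s) hsF
              rw [hεs] at h
              rw [show x (-s) = true from hxs] at h
              exact absurd h (by simp)
          rw [hL, hR]
        · push_neg at hb
          obtain ⟨hb1, hb2⟩ := hb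
          set G : Finset ℤ := insert (-s) (insert 0 F) with hGdef
          set εR : ℤ → Bool := fun t => if t ∈ F then ε t else true with hεRdef
          have hεmsR : εR (-s) = true := by
            by_cases h : (-s) ∈ F
            · have := hb2 h
              simp only [hεRdef, if_pos h]
              cases hε : ε (-s)
              · exact absurd hε this
              · rfl
            · simp [hεRdef, h]
          have hε0R : εR 0 = true := by
            by_cases h : (0 : ℤ) ∈ F
            · have := hb1 h
              simp only [hεRdef, if_pos h]
              cases hε : ε 0
              · exact absurd hε this
              · rfl
            · simp [hεRdef, h]
          have hSL : shift s ⁻¹' cyl F ε ∩ (one s ∩ one 0)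
              = cyl (G.image (· + s)) (fun t => εR (t - s)) := by
            ext x
            simp only [cyl, one, mem_inter_iff, mem_preimage, mem_setOf_eq]
            constructor
            · rintro ⟨hc, hxs, hx0⟩ t ht
              obtain ⟨u, huG, rfl⟩ := Finset.mem_image.mp ht
              rw [add_sub_cancel_right]
              rcases Finset.mem_insert.mp huG with rfl | hu
              · rw [hεmsR]
                have : -s + s = 0 := by ring
                rw [this]
                exact hx0
              rcases Finset.mem_insert.mp hu with rfl | huF
              · rw [hε0R]
                rw [zero_add]
                exact hxs
              · rw [show εR u = ε u from if_pos huF]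
                exact hc u huF
            · intro h
              refine ⟨fun t htF => ?_, ?_, ?_⟩
              · have h' := h (t + s) (Finset.mem_image.mpr
                  ⟨t, by simp [hGdef, htF], rfl⟩)
                rw [add_sub_cancel_right, show εR t = ε t from if_pos htF] at h'
                exact h'
              · have h' := h (0 + s) (Finset.mem_image.mpr
                  ⟨0, by simp [hGdef], rfl⟩)
                rw [add_sub_cancel_right, hε0R] at h'
                rwa [zero_add] at h'
              · have h' := h (-s + s) (Finset.mem_image.mpr
                  ⟨-s, by simp [hGdef], rfl⟩)
                rw [add_sub_cancel_right, hεmsR] at h'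
                rwa [show -s + s = 0 from by ring] at h'
          have hSR : cyl F ε ∩ (one (-s) ∩ one 0) = cyl G εR := by
            ext x
            simp only [cyl, one, mem_inter_iff, mem_setOf_eq]
            constructor
            · rintro ⟨hc, hxs, hx0⟩ t ht
              rcases Finset.mem_insert.mp ht with rfl | ht'
              · rw [hεmsR]; exact hxs
              rcases Finset.mem_insert.mp ht' with rfl | htF
              · rw [hε0R]; exact hx0
              · rw [show εR t = ε t from if_pos htF]
                exact hc t htF
            · intro h
              refine ⟨fun t htF => ?_, ?_, ?_⟩
              · have h' := h t (by simp [hGdef, htF])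
                rwa [show εR t = ε t from if_pos htF] at h'
              · have h' := h (-s) (by simp [hGdef])
                rwa [hεmsR] at h'
              · have h' := h 0 (by simp [hGdef])
                rwa [hε0R] at h'
          rw [hSL, hSR, hcylP, hcylP]
          exact hkey_cyl s G εR (by simp [hGdef]) (by simp [hGdef]) hεmsR hε0R
      have huniv : ν₁ univ = ν₂ univ := by
        have h := hcylagree (cyl ∅ (fun _ => true)) ⟨∅, fun _ => true, rfl⟩
        have he : cyl (∅ : Finset ℤ) (fun _ => true) = univ := by
          ext x; simp [cyl]
        rwa [he] at h
      have hext' : ν₁ = ν₂ :=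
        ext_of_generate_finite cylSets pi_eq_generateFrom isPiSystem_cylSets hcylagree huniv
      intro B hB
      rw [← hν₁ B hB, ← hν₂ B hB, hext']
    have h1 : μ (shift s ⁻¹' A ∩ one s) = μ (shift s ⁻¹' A ∩ (one s ∩ one 0)) := by
      rw [← inter_assoc]
      exact (hins _).symm
    have h2 : μ (A ∩ one (-s)) = μ (A ∩ (one (-s) ∩ one 0)) := by
      rw [← inter_assoc]
      exact (hins _).symm
    rw [h1, h2]
    exact hext A hA
  -- main identity, forward direction
  have hE1 := E1 μ hsh hone0
  -- reflection measure
  set μ' : Measure XX := μ.map rfl' with hμ'def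
  haveI : IsProbabilityMeasure μ' := Measure.isProbabilityMeasure_map measurable_rfl'.aemeasurable
  have hmap' : ∀ A : Set XX, MeasurableSet A → μ' A = μ (rfl' ⁻¹' A) := fun A hA =>
    Measure.map_apply measurable_rfl' hA
  have hone0' : μ' (one 0) = 1 := by
    rw [hmap' _ (measurableSet_one 0), rfl'_pre_one, neg_zero, hone0]
  have hsh' : ∀ (s : ℤ) (A : Set XX), MeasurableSet A →
      μ' (shift s ⁻¹' A ∩ one s) = μ' (A ∩ one (-s)) := by
    intro s A hA
    have hfun : shift s ∘ rfl' = rfl' ∘ shift (-s) := by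
      funext x
      funext t
      show x (-(t + s)) = x (-t + -s)
      congr 1
      ring
    have hcomm : rfl' ⁻¹' (shift s ⁻¹' A) = shift (-s) ⁻¹' (rfl' ⁻¹' A) := by
      rw [← Set.preimage_comp, ← Set.preimage_comp, hfun]
    calc μ' (shift s ⁻¹' A ∩ one s)
        = μ (rfl' ⁻¹' (shift s ⁻¹' A ∩ one s)) :=
          hmap' _ ((measurable_shift s hA).inter (measurableSet_one s))
      _ = μ (shift (-s) ⁻¹' (rfl' ⁻¹' A) ∩ one (-s)) := by
          rw [preimage_inter, hcomm, rfl'_pre_one]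
      _ = μ ((rfl' ⁻¹' A) ∩ one (-(-s))) := hsh (-s) _ (measurable_rfl' hA)
      _ = μ (rfl' ⁻¹' (A ∩ one (-s))) := by
          rw [preimage_inter, rfl'_pre_one, neg_neg]
      _ = μ' (A ∩ one (-s)) := (hmap' _ (hA.inter (measurableSet_one (-s)))).symm
  have hE1' := E1 μ' hsh' hone0' 0
  -- transfer of the reflected identity
  have hEv0' : μ' (Ev 0) = μ (Zlt 0) := by
    rw [hmap' _ (measurableSet_Ev 0), rfl'_pre_Ev0]
  have hGG0' : μ' (GG 0) = μ (Ev 0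
      ∩ rfl' ⁻¹' {x : XX | ∃ k : ℕ, 0 ≤ k ∧ cnt (Set.Ioi 0) x = (k : ℕ∞)}) := by
    rw [hmap' _ (measurableSet_GG 0)]
    congr 1
    show rfl' ⁻¹' (Zlt 0 ∩ _) = _
    rw [preimage_inter, rfl'_pre_Zlt0]
  have hθeq : μ (Ev 0) = μ (Zlt 0) := by
    have hle1 : μ (Zlt 0) ≤ μ (Ev 0) := by
      rw [← hEv0', hE1', hGG0']
      exact measure_mono inter_subset_left
    have hle2 : μ (Ev 0) ≤ μ (Zlt 0) := by
      rw [hE1 0]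
      exact measure_mono inter_subset_left
    exact le_antisymm hle2 hle1
  -- translating the goal
  have hPplus : ∀ m : ℕ, P {ω | SplusFn I ω = (m : ℕ∞)} = μ (Ev m) := by
    intro m
    rw [hmap _ (measurableSet_Ev m)]
    rfl
  have hPplus0 : P {ω | SplusFn I ω = (0 : ℕ∞)} = μ (Ev 0) := by
    have h := hPplus 0
    rwa [Nat.cast_zero] at h
  have hPminus : P {ω | SminusFn I ω = (0 : ℕ∞)} = μ (Zlt 0) := by
    rw [hmap _ (measurableSet_Zlt 0)]
    rfl
  have hPint : ∀ c : ℕ, P ({ω | SiFn I ω = (c : ℕ∞)} ∩ {ω | SminusFn I ω = 0})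
      = μ ({x : XX | cnt univ x = (c : ℕ∞)} ∩ Zlt 0) := by
    intro c
    rw [hmap _ ((measurableSet_cnt_eq univ c).inter (measurableSet_Zlt 0))]
    congr 1
    rw [preimage_inter]
    congr 1
    ext ω
    simp only [mem_preimage, mem_setOf_eq, cnt_univ]
    exact Iff.rfl
  -- swap lemma
  have hswap : ∀ m : ℕ, μ ({x : XX | cnt univ x = ((m + 1 : ℕ) : ℕ∞)} ∩ Zlt 0)
      = μ ({x : XX | cnt (Set.Ioi 0) x = (m : ℕ∞)} ∩ Zlt 0) := by
    intro m
    rw [← hins ({x : XX | cnt univ x = ((m + 1 : ℕ) : ℕ∞)} ∩ Zlt 0),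
      ← hins ({x : XX | cnt (Set.Ioi 0) x = (m : ℕ∞)} ∩ Zlt 0)]
    congr 1
    ext x
    simp only [mem_inter_iff, mem_setOf_eq]
    constructor
    · rintro ⟨⟨hc, hZ⟩, hx0⟩
      refine ⟨⟨?_, hZ⟩, hx0⟩
      have hkey : {t : ℤ | t ∈ (univ : Set ℤ) ∧ x t = true}
          = insert 0 {t : ℤ | t ∈ Set.Ioi (0 : ℤ) ∧ x t = true} := by
        ext t
        simp only [mem_univ, true_and, mem_setOf_eq, Set.mem_insert_iff, Set.mem_Ioi]
        constructor
        · intro hxt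
          rcases lt_trichotomy t 0 with h | h | h
          · exact absurd hxt (by rw [mem_Zlt.mp hZ t h]; simp)
          · exact Or.inl h
          · exact Or.inr ⟨h, hxt⟩
        · rintro (rfl | ⟨_, h⟩)
          · exact hx0
          · exact h
      have hc' : cnt (Set.Ioi 0) x + 1 = (m : ℕ∞) + 1 := by
        have : cnt univ x = cnt (Set.Ioi 0) x + 1 := by
          unfold cnt
          rw [hkey, Set.encard_insert_of_notMem (by simp [Set.mem_Ioi])]
        rw [← this, hc]
        push_cast
        ring
      exact WithTop.add_right_cancel (by simp : (1 : ℕ∞) ≠ ⊤) hc'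
    · rintro ⟨⟨hc, hZ⟩, hx0⟩
      refine ⟨⟨?_, hZ⟩, hx0⟩
      have hkey : {t : ℤ | t ∈ (univ : Set ℤ) ∧ x t = true}
          = insert 0 {t : ℤ | t ∈ Set.Ioi (0 : ℤ) ∧ x t = true} := by
        ext t
        simp only [mem_univ, true_and, mem_setOf_eq, Set.mem_insert_iff, Set.mem_Ioi]
        constructor
        · intro hxt
          rcases lt_trichotomy t 0 with h | h | h
          · exact absurd hxt (by rw [mem_Zlt.mp hZ t h]; simp)
          · exact Or.inl h
          · exact Or.inr ⟨h, hxt⟩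
        · rintro (rfl | ⟨_, h⟩)
          · exact hx0
          · exact h
      show cnt univ x = ((m + 1 : ℕ) : ℕ∞)
      unfold cnt
      rw [hkey, Set.encard_insert_of_notMem (by simp [Set.mem_Ioi]),
        show {t : ℤ | t ∈ Set.Ioi (0 : ℤ) ∧ x t = true}.encard = (m : ℕ∞) from hc]
      push_cast
      ring
  -- tsum identity
  have htsum : ∑' i : ℕ, μ ({x : XX | cnt (Set.Ioi 0) x = ((l + i : ℕ) : ℕ∞)} ∩ Zlt 0)
      = μ (GG l) := by
    have hdisj : Pairwise (Function.onFun Disjoint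
        (fun i : ℕ => {x : XX | cnt (Set.Ioi 0) x = ((l + i : ℕ) : ℕ∞)} ∩ Zlt 0)) := by
      intro a b hab
      refine Set.disjoint_left.mpr ?_
      rintro x ⟨h1, _⟩ ⟨h2, _⟩
      have : ((l + a : ℕ) : ℕ∞) = ((l + b : ℕ) : ℕ∞) := by rw [← h1, h2]
      have hab' : l + a = l + b := by exact_mod_cast this
      exact hab (by omega)
    rw [← measure_iUnion hdisj
      (fun i => (measurableSet_cnt_eq _ _).inter (measurableSet_Zlt 0))]
    congr 1
    ext x
    simp only [mem_iUnion, mem_inter_iff, mem_setOf_eq, GG]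
    constructor
    · rintro ⟨i, hc, hZ⟩
      exact ⟨hZ, l + i, Nat.le_add_right l i, hc⟩
    · rintro ⟨hZ, k, hk, hc⟩
      refine ⟨k - l, ?_, hZ⟩
      rwa [show l + (k - l) = k from by omega]
  -- finish
  have hθpos : μ (Zlt 0) ≠ 0 := by
    rw [← hθeq, ← hPplus0]
    exact hθ.ne'
  have hθtop : μ (Zlt 0) ≠ ⊤ := measure_ne_top _ _
  have hterm : ∀ i : ℕ,
      P ({ω | SiFn I ω = ((l + 1 + i : ℕ) : ℕ∞)} ∩ {ω | SminusFn I ω = 0})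
        / P {ω | SminusFn I ω = (0 : ℕ∞)}
      = μ ({x : XX | cnt (Set.Ioi 0) x = ((l + i : ℕ) : ℕ∞)} ∩ Zlt 0) / μ (Zlt 0) := by
    intro i
    rw [hPint, hPminus, show (l + 1 + i : ℕ) = (l + i) + 1 from by omega, hswap]
  calc P {ω | SplusFn I ω = (l : ℕ∞)} = μ (Ev l) := hPplus l
    _ = μ (GG l) := hE1 l
    _ = (μ (Zlt 0) * (μ (Zlt 0))⁻¹) * μ (GG l) := by
        rw [ENNReal.mul_inv_cancel hθpos hθtop, one_mul]
    _ = μ (Zlt 0) * ∑' i : ℕ,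
          μ ({x : XX | cnt (Set.Ioi 0) x = ((l + i : ℕ) : ℕ∞)} ∩ Zlt 0) / μ (Zlt 0) := by
        rw [mul_assoc]
        congr 1
        rw [mul_comm (μ (Zlt 0))⁻¹ (μ (GG l)), ← htsum, ← ENNReal.tsum_mul_right]
        exact tsum_congr fun i => (div_eq_mul_inv _ _).symm
    _ = (P {ω | SplusFn I ω = 0}) * ∑' i : ℕ,
          P ({ω | SiFn I ω = ((l + 1 + i : ℕ) : ℕ∞)} ∩ {ω | SminusFn I ω = 0})
            / P {ω | SminusFn I ω = 0} := by
        rw [hPplus0, hθeq]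
        congr 1
        exact (tsum_congr hterm).symm
end
end

section
/- Under Assumption 1, the following three statements are equivalent: (i) θ := P(S₊ⁱ = 0) = 0; (ii) P(S₊ⁱ = ∞) = 1 (equivalently, P(S₋ⁱ = ∞) = 1); (iii) P(Sⁱ = ∞) = 1. -/
open MeasureTheory Filter Set ENNReal

noncomputable section

noncomputable section

lemma meas_inter_full {Ω : Type*} [MeasurableSpace Ω] (P : Measure Ω) [IsProbabilityMeasure P]
    {X Y : Set Ω} (hYm : MeasurableSet Y) (hY : P Y = 1) : P (X ∩ Y) = P X := by
  refine le_antisymm (measure_mono inter_subset_left) ?_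
  have h1 : P Yᶜ = 0 := (prob_compl_eq_zero_iff hYm).mpr hY
  calc P X ≤ P (X ∩ Y) + P (X \ Y) := measure_le_inter_add_diff P X Y
    _ ≤ P (X ∩ Y) + P Yᶜ := by gcongr; exact fun ω h => h.2
    _ = P (X ∩ Y) := by rw [h1, add_zero]

-- measurability of cylinder events
lemma meas_cyl {Ω : Type*} [MeasurableSpace Ω] (I : ℤ → Ω → Bool) (hI : ∀ t, Measurable (I t))
    (t : ℤ) (b : Bool) : MeasurableSet {ω | I t ω = b} :=
  (hI t) (measurableSet_singleton b)

lemma meas_event {Ω : Type*} [MeasurableSpace Ω] (I : ℤ → Ω → Bool) (hI : ∀ t, Measurable (I t))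
    (F : Finset ℤ) (ε : ℤ → Bool) : MeasurableSet {ω | ∀ t ∈ F, I t ω = ε t} := by
  have : {ω | ∀ t ∈ F, I t ω = ε t} = ⋂ t ∈ F, {ω | I t ω = ε t} := by
    ext ω; simp
  rw [this]
  exact MeasurableSet.biInter F.countable_toSet (fun t _ => meas_cyl I hI t (ε t))

-- set descriptions
lemma splus_zero_iff {Ω : Type*} (I : ℤ → Ω → Bool) (ω : Ω) :
    SplusFn I ω = 0 ↔ ∀ t : ℤ, 0 < t → I t ω = false := by
  rw [SplusFn, Set.encard_eq_zero, Set.eq_empty_iff_forall_notMem]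
  constructor
  · intro h t ht
    by_contra hb
    exact h t ⟨ht, by simpa using hb⟩
  · rintro h t ⟨ht, hb⟩
    rw [h t ht] at hb; simp at hb
lemma sminus_zero_iff {Ω : Type*} (I : ℤ → Ω → Bool) (ω : Ω) :
    SminusFn I ω = 0 ↔ ∀ t : ℤ, t < 0 → I t ω = false := by
  rw [SminusFn, Set.encard_eq_zero, Set.eq_empty_iff_forall_notMem]
  constructor
  · intro h t ht
    by_contra hb
    exact h t ⟨ht, by simpa using hb⟩
  · rintro h t ⟨ht, hb⟩
    rw [h t ht] at hb; simp at hb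

lemma splus_top_iff {Ω : Type*} (I : ℤ → Ω → Bool) (ω : Ω) :
    SplusFn I ω = ⊤ ↔ ∀ N : ℤ, ∃ t : ℤ, N < t ∧ 0 < t ∧ I t ω = true := by
  rw [SplusFn, Set.encard_eq_top_iff]
  constructor
  · intro hinf N
    by_contra hc
    push_neg at hc
    refine hinf (Set.Finite.subset (Set.finite_Icc 1 N) ?_)
    rintro t ⟨ht, hb⟩
    rcases le_or_gt t N with h1 | h1
    · exact ⟨ht, h1⟩
    · exact absurd hb (hc t h1 ht)
  · intro h
    intro hfin
    obtain ⟨N, hN⟩ := hfin.bddAbove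
    obtain ⟨t, ht1, ht2, ht3⟩ := h N
    exact absurd (hN ⟨ht2, ht3⟩) (by omega)

lemma sminus_top_iff {Ω : Type*} (I : ℤ → Ω → Bool) (ω : Ω) :
    SminusFn I ω = ⊤ ↔ ∀ N : ℤ, ∃ t : ℤ, t < N ∧ t < 0 ∧ I t ω = true := by
  rw [SminusFn, Set.encard_eq_top_iff]
  constructor
  · intro hinf N
    by_contra hc
    push_neg at hc
    refine hinf (Set.Finite.subset (Set.finite_Icc N (-1)) ?_)
    rintro t ⟨ht, hb⟩
    rcases le_or_gt N t with h1 | h1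
    · exact ⟨h1, by omega⟩
    · exact absurd hb (hc t h1 ht)
  · intro h hfin
    obtain ⟨N, hN⟩ := hfin.bddBelow
    obtain ⟨t, ht1, ht2, ht3⟩ := h N
    exact absurd (hN ⟨ht2, ht3⟩) (by omega)

-- S = ⊤ iff S₊ = ⊤ or S₋ = ⊤
lemma si_top_iff {Ω : Type*} (I : ℤ → Ω → Bool) (ω : Ω) :
    SiFn I ω = ⊤ ↔ SplusFn I ω = ⊤ ∨ SminusFn I ω = ⊤ := by
  rw [SiFn, SplusFn, SminusFn, Set.encard_eq_top_iff, Set.encard_eq_top_iff,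
    Set.encard_eq_top_iff]
  constructor
  · intro h
    by_contra hc
    push_neg at hc
    refine h ?_
    have hsub : {t : ℤ | I t ω = true} ⊆
        {t : ℤ | 0 < t ∧ I t ω = true} ∪ {t : ℤ | t < 0 ∧ I t ω = true} ∪ {0} := by
      intro t ht
      rcases lt_trichotomy t 0 with h1 | h1 | h1
      · exact Or.inl (Or.inr ⟨h1, ht⟩)
      · exact Or.inr h1
      · exact Or.inl (Or.inl ⟨h1, ht⟩)
    exact Set.Finite.subset (((hc.1.union hc.2).union (Set.finite_singleton 0))) hsub
  · rintro (h | h)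
    · exact h.mono (fun t ht => ht.2)
    · exact h.mono (fun t ht => ht.2)

-- SminusFn I = SplusFn (I ∘ neg)
lemma sminus_eq_splus_neg {Ω : Type*} (I : ℤ → Ω → Bool) (ω : Ω) :
    SminusFn I ω = SplusFn (fun t => I (-t)) ω := by
  rw [SminusFn, SplusFn]
  have : {t : ℤ | t < 0 ∧ I t ω = true} = Neg.neg '' {t : ℤ | 0 < t ∧ I (-t) ω = true} := by
    ext t
    simp only [Set.mem_image, Set.mem_setOf_eq]
    constructor
    · intro ⟨h1, h2⟩; exact ⟨-t, ⟨by omega, by simpa using h2⟩, by omega⟩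
    · rintro ⟨u, ⟨h1, h2⟩, rfl⟩; exact ⟨by omega, h2⟩
  rw [this, neg_injective.encard_image _]
lemma meas_splus_zero {Ω : Type*} [MeasurableSpace Ω] (I : ℤ → Ω → Bool)
    (hI : ∀ t, Measurable (I t)) : MeasurableSet {ω | SplusFn I ω = 0} := by
  have : {ω | SplusFn I ω = 0} = ⋂ t : ℤ, {ω | 0 < t → I t ω = false} := by
    ext ω; simp [splus_zero_iff]
  rw [this]
  refine MeasurableSet.iInter (fun t => ?_)
  by_cases h : 0 < t
  · simp only [h, true_implies]; exact meas_cyl I hI t false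
  · simp only [h, false_implies]; exact MeasurableSet.univ.congr (by ext ω; simp)

lemma meas_sminus_zero {Ω : Type*} [MeasurableSpace Ω] (I : ℤ → Ω → Bool)
    (hI : ∀ t, Measurable (I t)) : MeasurableSet {ω | SminusFn I ω = 0} := by
  have : {ω | SminusFn I ω = 0} = ⋂ t : ℤ, {ω | t < 0 → I t ω = false} := by
    ext ω; simp [sminus_zero_iff]
  rw [this]
  refine MeasurableSet.iInter (fun t => ?_)
  by_cases h : t < 0
  · simp only [h, true_implies]; exact meas_cyl I hI t false
  · simp only [h, false_implies]; exact MeasurableSet.univ.congr (by ext ω; simp)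

lemma meas_splus_top {Ω : Type*} [MeasurableSpace Ω] (I : ℤ → Ω → Bool)
    (hI : ∀ t, Measurable (I t)) : MeasurableSet {ω | SplusFn I ω = ⊤} := by
  have : {ω | SplusFn I ω = ⊤} = ⋂ N : ℤ, ⋃ t : ℤ, {ω | N < t ∧ 0 < t ∧ I t ω = true} := by
    ext ω; simp [splus_top_iff]
  rw [this]
  refine MeasurableSet.iInter (fun N => MeasurableSet.iUnion (fun t => ?_))
  by_cases h : N < t ∧ 0 < t
  · have : {ω : Ω | N < t ∧ 0 < t ∧ I t ω = true} = {ω | I t ω = true} := by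
      ext ω; simp [h.1, h.2]
    rw [this]; exact meas_cyl I hI t true
  · have : {ω : Ω | N < t ∧ 0 < t ∧ I t ω = true} = ∅ := by
      ext ω; simp; intro h1 h2; exact absurd ⟨h1, h2⟩ h
    rw [this]; exact MeasurableSet.empty

lemma meas_sminus_top {Ω : Type*} [MeasurableSpace Ω] (I : ℤ → Ω → Bool)
    (hI : ∀ t, Measurable (I t)) : MeasurableSet {ω | SminusFn I ω = ⊤} := by
  have : {ω | SminusFn I ω = ⊤} = ⋂ N : ℤ, ⋃ t : ℤ, {ω | t < N ∧ t < 0 ∧ I t ω = true} := by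
    ext ω; simp [sminus_top_iff]
  rw [this]
  refine MeasurableSet.iInter (fun N => MeasurableSet.iUnion (fun t => ?_))
  by_cases h : t < N ∧ t < 0
  · have : {ω : Ω | t < N ∧ t < 0 ∧ I t ω = true} = {ω | I t ω = true} := by
      ext ω; simp [h.1, h.2]
    rw [this]; exact meas_cyl I hI t true
  · have : {ω : Ω | t < N ∧ t < 0 ∧ I t ω = true} = ∅ := by
      ext ω; simp; intro h1 h2; exact absurd ⟨h1, h2⟩ h
    rw [this]; exact MeasurableSet.empty

lemma si_top_set {Ω : Type*} (I : ℤ → Ω → Bool) :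
    {ω | SiFn I ω = ⊤} = {ω | SplusFn I ω = ⊤} ∪ {ω | SminusFn I ω = ⊤} := by
  ext ω; simp [si_top_iff]

lemma meas_si_top {Ω : Type*} [MeasurableSpace Ω] (I : ℤ → Ω → Bool)
    (hI : ∀ t, Measurable (I t)) : MeasurableSet {ω | SiFn I ω = ⊤} := by
  rw [si_top_set]
  exact (meas_splus_top I hI).union (meas_sminus_top I hI)
lemma infsum_zero {Ω : Type*} [MeasurableSpace Ω] (P : Measure Ω) [IsProbabilityMeasure P]
    (J : ℤ → Ω → Bool) (hJ : ∀ t, Measurable (J t)) {C : Set Ω} (hC : MeasurableSet C)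
    (hinf : ∀ ω ∈ C, {s : ℤ | J s ω = true}.Infinite)
    (hfin : ∑' s : ℤ, P ({ω | J s ω = true} ∩ C) ≠ ⊤) : P C = 0 := by
  by_contra hne
  refine hfin (top_le_iff.mp ?_)
  have h1 : ∀ s : ℤ, P ({ω | J s ω = true} ∩ C)
      = ∫⁻ ω, ({ω | J s ω = true} ∩ C).indicator (fun _ => (1 : ℝ≥0∞)) ω ∂P := by
    intro s
    rw [lintegral_indicator_const ((meas_cyl J hJ s true).inter hC), one_mul]
  calc (⊤:ℝ≥0∞) = ⊤ * P C := (ENNReal.top_mul hne).symm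
    _ = ∫⁻ ω, C.indicator (fun _ => (⊤:ℝ≥0∞)) ω ∂P := (lintegral_indicator_const hC ⊤).symm
    _ ≤ ∫⁻ ω, ∑' s : ℤ, ({ω | J s ω = true} ∩ C).indicator (fun _ => (1:ℝ≥0∞)) ω ∂P := by
        refine lintegral_mono (fun ω => ?_)
        by_cases hω : ω ∈ C
        · rw [Set.indicator_of_mem hω]
          have heq : ∑' s : ℤ, ({ω' | J s ω' = true} ∩ C).indicator (fun _ => (1:ℝ≥0∞)) ω
              = ∑' s : ℤ, ({s' : ℤ | J s' ω = true}).indicator (fun _ => (1:ℝ≥0∞)) s := by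
            refine tsum_congr (fun s => ?_)
            by_cases hs : J s ω = true
            · have hm1 : ω ∈ {ω' | J s ω' = true} ∩ C := ⟨hs, hω⟩
              have hm2 : s ∈ {s' : ℤ | J s' ω = true} := hs
              rw [Set.indicator_of_mem hm1, Set.indicator_of_mem hm2]
            · have hm1 : ω ∉ {ω' | J s ω' = true} ∩ C := fun h => hs h.1
              have hm2 : s ∉ {s' : ℤ | J s' ω = true} := hs
              rw [Set.indicator_of_notMem hm1, Set.indicator_of_notMem hm2]
          rw [heq, ← tsum_subtype {s' : ℤ | J s' ω = true} (fun _ => (1:ℝ≥0∞))]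
          have h2 := (hinf ω hω).to_subtype
          exact le_of_eq (ENNReal.tsum_const_eq_top_of_ne_zero one_ne_zero).symm
        · rw [Set.indicator_of_notMem hω]; exact zero_le
    _ = ∑' s : ℤ, ∫⁻ ω, ({ω | J s ω = true} ∩ C).indicator (fun _ => (1:ℝ≥0∞)) ω ∂P := by
        refine lintegral_tsum (fun s => ?_)
        exact ((measurable_const.indicator ((meas_cyl J hJ s true).inter hC))).aemeasurable
    _ = ∑' s : ℤ, P ({ω | J s ω = true} ∩ C) := by
        exact tsum_congr (fun s => (h1 s).symm)
lemma P_I0 {Ω : Type*} [MeasurableSpace Ω] (P : Measure Ω)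
    (I : ℤ → Ω → Bool)
    {Ωn : ℕ → Type*} [∀ n, MeasurableSpace (Ωn n)]
    (Pn : ∀ n, Measure (Ωn n)) (hPn : ∀ n, IsProbabilityMeasure (Pn n))
    (In : ∀ n, ℤ → Ωn n → Bool)
    (hpos : ∀ n, 0 < Pn n {ω | In n 0 ω = true})
    (hconv : ∀ (F : Finset ℤ) (ε : ℤ → Bool),
      Tendsto (fun n =>
          Pn n ({ω | ∀ t ∈ F, In n t ω = ε t} ∩ {ω | In n 0 ω = true})
            / Pn n {ω | In n 0 ω = true}) atTop
        (nhds (P {ω | ∀ t ∈ F, I t ω = ε t}))) :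
    P {ω | I 0 ω = true} = 1 := by
  have h := hconv {0} (fun _ => true)
  have heq : ∀ n, (Pn n ({ω | ∀ t ∈ ({0} : Finset ℤ), In n t ω = true} ∩ {ω | In n 0 ω = true})
      / Pn n {ω | In n 0 ω = true}) = 1 := by
    intro n
    have : {ω | ∀ t ∈ ({0} : Finset ℤ), In n t ω = true} = {ω | In n 0 ω = true} := by
      ext ω; simp
    rw [this, Set.inter_self]
    have := hPn n
    exact ENNReal.div_self (hpos n).ne' (measure_ne_top _ _)
  have h2 : Tendsto (fun _ : ℕ => (1:ℝ≥0∞)) atTop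
      (nhds (P {ω | ∀ t ∈ ({0} : Finset ℤ), I t ω = true})) := by
    refine h.congr (fun n => (heq n))
  have h3 := tendsto_nhds_unique h2 tendsto_const_nhds
  have : {ω | ∀ t ∈ ({0} : Finset ℤ), I t ω = (fun _ => true) t} = {ω | I 0 ω = true} := by
    ext ω; simp
  rw [← this]
  exact h3
lemma eventG_eq {α : Type*} (K : ℤ → α → Bool) (s m : ℕ) :
    {ω : α | ∀ t ∈ insert (0:ℤ) (insert ((s:ℤ)) (Finset.Icc ((s:ℤ)+1) ((s:ℤ)+(m:ℤ)))),
        K t ω = decide (t = 0 ∨ t = (s:ℤ))}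
    = {ω : α | K 0 ω = true ∧ K (s:ℤ) ω = true ∧
        ∀ t ∈ Finset.Icc ((s:ℤ)+1) ((s:ℤ)+(m:ℤ)), K t ω = false} := by
  ext ω
  simp only [Finset.mem_insert, Finset.mem_Icc, Set.mem_setOf_eq]
  constructor
  · intro h
    refine ⟨by simpa using h 0 (Or.inl rfl), by simpa using h (s:ℤ) (Or.inr (Or.inl rfl)), ?_⟩
    intro t ht
    have h2 := h t (Or.inr (Or.inr ht))
    have hne : ¬(t = 0 ∨ t = (s:ℤ)) := by omega
    rwa [decide_eq_false hne] at h2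
  · rintro ⟨h0, hs, hrest⟩ t ht
    rcases ht with rfl | rfl | ht
    · simpa using h0
    · simpa using hs
    · have hne : ¬(t = 0 ∨ t = (s:ℤ)) := by omega
      rw [decide_eq_false hne]
      exact hrest t ht

lemma eventG2_eq {α : Type*} (K : ℤ → α → Bool) (s m : ℕ) :
    {ω : α | ∀ t ∈ insert (0:ℤ) (insert (-(s:ℤ)) (Finset.Icc (1:ℤ) ((m:ℤ)))),
        K t ω = decide (t = 0 ∨ t = -(s:ℤ))}
    = {ω : α | K 0 ω = true ∧ K (-(s:ℤ)) ω = true ∧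
        ∀ t ∈ Finset.Icc (1:ℤ) ((m:ℤ)), K t ω = false} := by
  ext ω
  simp only [Finset.mem_insert, Finset.mem_Icc, Set.mem_setOf_eq]
  constructor
  · intro h
    refine ⟨by simpa using h 0 (Or.inl rfl), by simpa using h (-(s:ℤ)) (Or.inr (Or.inl rfl)), ?_⟩
    intro t ht
    have h2 := h t (Or.inr (Or.inr ht))
    have hne : ¬(t = 0 ∨ t = -(s:ℤ)) := by omega
    rwa [decide_eq_false hne] at h2
  · rintro ⟨h0, hs, hrest⟩ t ht
    rcases ht with rfl | rfl | ht
    · simpa using h0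
    · simpa using hs
    · have hne : ¬(t = 0 ∨ t = -(s:ℤ)) := by omega
      rw [decide_eq_false hne]
      exact hrest t ht
lemma shift_event {α : Type*} (K : ℤ → α → Bool) (s m : ℕ) :
    {ω : α | ∀ t ∈ insert (0:ℤ) (insert ((s:ℤ)) (Finset.Icc ((s:ℤ)+1) ((s:ℤ)+(m:ℤ)))),
        K (t + -(s:ℤ)) ω = decide (t = 0 ∨ t = (s:ℤ))}
    = {ω : α | ∀ t ∈ insert (0:ℤ) (insert (-(s:ℤ)) (Finset.Icc (1:ℤ) ((m:ℤ)))),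
        K t ω = decide (t = 0 ∨ t = -(s:ℤ))} := by
  ext ω
  simp only [Finset.mem_insert, Finset.mem_Icc, Set.mem_setOf_eq]
  constructor
  · intro h t ht
    rcases ht with rfl | rfl | ht
    · have h2 := h (s:ℤ) (Or.inr (Or.inl rfl))
      rw [show (s:ℤ) + -(s:ℤ) = 0 by ring, decide_eq_true (show (s:ℤ) = 0 ∨ (s:ℤ) = (s:ℤ) from Or.inr rfl)] at h2
      rw [decide_eq_true (show (0:ℤ) = 0 ∨ (0:ℤ) = -(s:ℤ) from Or.inl rfl)]
      exact h2
    · have h2 := h 0 (Or.inl rfl)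
      rw [show (0:ℤ) + -(s:ℤ) = -(s:ℤ) by ring, decide_eq_true (show (0:ℤ) = 0 ∨ (0:ℤ) = (s:ℤ) from Or.inl rfl)] at h2
      rw [decide_eq_true (show -(s:ℤ) = 0 ∨ -(s:ℤ) = -(s:ℤ) from Or.inr rfl)]
      exact h2
    · have h2 := h (t + (s:ℤ)) (Or.inr (Or.inr ⟨by omega, by omega⟩))
      rw [show t + (s:ℤ) + -(s:ℤ) = t by ring, decide_eq_false (show ¬(t + (s:ℤ) = 0 ∨ t + (s:ℤ) = (s:ℤ)) by omega)] at h2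
      rw [decide_eq_false (show ¬(t = 0 ∨ t = -(s:ℤ)) by omega)]
      exact h2
  · intro h t ht
    rcases ht with rfl | rfl | ht
    · have h2 := h (-(s:ℤ)) (Or.inr (Or.inl rfl))
      rw [decide_eq_true (show -(s:ℤ) = 0 ∨ -(s:ℤ) = -(s:ℤ) from Or.inr rfl)] at h2
      rw [show (0:ℤ) + -(s:ℤ) = -(s:ℤ) by ring, decide_eq_true (show (0:ℤ) = 0 ∨ (0:ℤ) = (s:ℤ) from Or.inl rfl)]
      exact h2
    · have h2 := h 0 (Or.inl rfl)
      rw [decide_eq_true (show (0:ℤ) = 0 ∨ (0:ℤ) = -(s:ℤ) from Or.inl rfl)] at h2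
      rw [show (s:ℤ) + -(s:ℤ) = 0 by ring, decide_eq_true (show (s:ℤ) = 0 ∨ (s:ℤ) = (s:ℤ) from Or.inr rfl)]
      exact h2
    · have h2 := h (t - (s:ℤ)) (Or.inr (Or.inr ⟨by omega, by omega⟩))
      rw [decide_eq_false (show ¬(t - (s:ℤ) = 0 ∨ t - (s:ℤ) = -(s:ℤ)) by omega)] at h2
      rw [decide_eq_false (show ¬(t = 0 ∨ t = (s:ℤ)) by omega), show t + -(s:ℤ) = t - (s:ℤ) by ring]
      exact h2
lemma timechange_fin {Ω : Type*} [MeasurableSpace Ω] (P : Measure Ω)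
    (I : ℤ → Ω → Bool)
    {Ωn : ℕ → Type*} [∀ n, MeasurableSpace (Ωn n)]
    (Pn : ∀ n, Measure (Ωn n)) (hPn : ∀ n, IsProbabilityMeasure (Pn n))
    (In : ∀ n, ℤ → Ωn n → Bool)
    (hpos : ∀ n, 0 < Pn n {ω | In n 0 ω = true})
    (hstat : ∀ n (F : Finset ℤ) (ε : ℤ → Bool) (k : ℤ),
      Pn n {ω | ∀ t ∈ F, In n t ω = ε t} = Pn n {ω | ∀ t ∈ F, In n (t + k) ω = ε t})
    (hconv : ∀ (F : Finset ℤ) (ε : ℤ → Bool),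
      Tendsto (fun n =>
          Pn n ({ω | ∀ t ∈ F, In n t ω = ε t} ∩ {ω | In n 0 ω = true})
            / Pn n {ω | In n 0 ω = true}) atTop
        (nhds (P {ω | ∀ t ∈ F, I t ω = ε t})))
    (s m : ℕ) :
    P {ω | I 0 ω = true ∧ I (s:ℤ) ω = true ∧
        ∀ t ∈ Finset.Icc ((s:ℤ)+1) ((s:ℤ)+(m:ℤ)), I t ω = false}
    = P {ω | I 0 ω = true ∧ I (-(s:ℤ)) ω = true ∧
        ∀ t ∈ Finset.Icc (1:ℤ) ((m:ℤ)), I t ω = false} := by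
  set G : Finset ℤ := insert (0:ℤ) (insert ((s:ℤ)) (Finset.Icc ((s:ℤ)+1) ((s:ℤ)+(m:ℤ)))) with hG
  set G2 : Finset ℤ := insert (0:ℤ) (insert (-(s:ℤ)) (Finset.Icc (1:ℤ) ((m:ℤ)))) with hG2
  set ε : ℤ → Bool := fun t => decide (t = 0 ∨ t = (s:ℤ)) with hε
  set ε2 : ℤ → Bool := fun t => decide (t = 0 ∨ t = -(s:ℤ)) with hε2
  -- the event contains {In 0 = true}
  have hsub : ∀ n, {ω : Ωn n | ∀ t ∈ G, In n t ω = ε t} ∩ {ω : Ωn n | In n 0 ω = true}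
      = {ω : Ωn n | ∀ t ∈ G, In n t ω = ε t} := by
    intro n
    set K := In n
    refine Set.inter_eq_left.mpr (fun ω hω => ?_)
    have h0 := hω 0 (Finset.mem_insert_self 0 _)
    show K 0 _ = true
    rw [h0]
    simp [hε]
  have hsub2 : ∀ n, {ω : Ωn n | ∀ t ∈ G2, In n t ω = ε2 t} ∩ {ω : Ωn n | In n 0 ω = true}
      = {ω : Ωn n | ∀ t ∈ G2, In n t ω = ε2 t} := by
    intro n
    set K := In n
    refine Set.inter_eq_left.mpr (fun ω hω => ?_)
    have h0 := hω 0 (Finset.mem_insert_self 0 _)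
    show K 0 _ = true
    rw [h0]
    simp [hε2]
  -- prelimit equality
  have hpre : ∀ n, Pn n {ω | ∀ t ∈ G, In n t ω = ε t} = Pn n {ω | ∀ t ∈ G2, In n t ω = ε2 t} := by
    intro n
    rw [hstat n G ε (-(s:ℤ))]
    congr 1
    exact shift_event (In n) s m
  have hc1 := hconv G ε
  have hc2 := hconv G2 ε2
  have hsame : (fun n => Pn n ({ω | ∀ t ∈ G, In n t ω = ε t} ∩ {ω | In n 0 ω = true})
      / Pn n {ω | In n 0 ω = true})
      = (fun n => Pn n ({ω | ∀ t ∈ G2, In n t ω = ε2 t} ∩ {ω | In n 0 ω = true})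
      / Pn n {ω | In n 0 ω = true}) := by
    funext n
    have e1 := hsub n
    have e2 := hsub2 n
    rw [e1, e2, hpre n]
  rw [hsame] at hc1
  have := tendsto_nhds_unique hc1 hc2
  rw [hG, hG2, hε, hε2] at this
  rw [← eventG_eq I s m, ← eventG2_eq I s m]
  exact this
lemma timechange_inf {Ω : Type*} [MeasurableSpace Ω] (P : Measure Ω) [IsProbabilityMeasure P]
    (I : ℤ → Ω → Bool) (hI : ∀ t, Measurable (I t))
    {Ωn : ℕ → Type*} [∀ n, MeasurableSpace (Ωn n)]
    (Pn : ∀ n, Measure (Ωn n)) (hPn : ∀ n, IsProbabilityMeasure (Pn n))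
    (In : ∀ n, ℤ → Ωn n → Bool)
    (hpos : ∀ n, 0 < Pn n {ω | In n 0 ω = true})
    (hstat : ∀ n (F : Finset ℤ) (ε : ℤ → Bool) (k : ℤ),
      Pn n {ω | ∀ t ∈ F, In n t ω = ε t} = Pn n {ω | ∀ t ∈ F, In n (t + k) ω = ε t})
    (hconv : ∀ (F : Finset ℤ) (ε : ℤ → Bool),
      Tendsto (fun n =>
          Pn n ({ω | ∀ t ∈ F, In n t ω = ε t} ∩ {ω | In n 0 ω = true})
            / Pn n {ω | In n 0 ω = true}) atTop
        (nhds (P {ω | ∀ t ∈ F, I t ω = ε t})))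
    (s : ℕ) :
    P {ω | I 0 ω = true ∧ I (s:ℤ) ω = true ∧ ∀ t : ℤ, (s:ℤ) < t → I t ω = false}
    = P {ω | I 0 ω = true ∧ I (-(s:ℤ)) ω = true ∧ ∀ t : ℤ, 0 < t → I t ω = false} := by
  set f : ℕ → Set Ω := fun m => {ω | I 0 ω = true ∧ I (s:ℤ) ω = true ∧
      ∀ t ∈ Finset.Icc ((s:ℤ)+1) ((s:ℤ)+(m:ℤ)), I t ω = false} with hf
  set g : ℕ → Set Ω := fun m => {ω | I 0 ω = true ∧ I (-(s:ℤ)) ω = true ∧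
      ∀ t ∈ Finset.Icc (1:ℤ) ((m:ℤ)), I t ω = false} with hg
  have hfm : ∀ m, MeasurableSet (f m) := by
    intro m
    have : f m = {ω | I 0 ω = true} ∩ ({ω | I (s:ℤ) ω = true} ∩
        ⋂ t ∈ Finset.Icc ((s:ℤ)+1) ((s:ℤ)+(m:ℤ)), {ω | I t ω = false}) := by
      ext ω; simp [hf]
    rw [this]
    exact (meas_cyl I hI 0 true).inter ((meas_cyl I hI _ true).inter
      (MeasurableSet.biInter (Finset.countable_toSet _) (fun t _ => meas_cyl I hI t false)))
  have hgm : ∀ m, MeasurableSet (g m) := by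
    intro m
    have : g m = {ω | I 0 ω = true} ∩ ({ω | I (-(s:ℤ)) ω = true} ∩
        ⋂ t ∈ Finset.Icc (1:ℤ) ((m:ℤ)), {ω | I t ω = false}) := by
      ext ω; simp [hg]
    rw [this]
    exact (meas_cyl I hI 0 true).inter ((meas_cyl I hI _ true).inter
      (MeasurableSet.biInter (Finset.countable_toSet _) (fun t _ => meas_cyl I hI t false)))
  have hfa : Antitone f := by
    intro m m' hmm ω hω
    exact ⟨hω.1, hω.2.1, fun t ht => hω.2.2 t (Finset.mem_Icc.mpr
      ⟨(Finset.mem_Icc.mp ht).1, le_trans (Finset.mem_Icc.mp ht).2 (by omega)⟩)⟩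
  have hga : Antitone g := by
    intro m m' hmm ω hω
    exact ⟨hω.1, hω.2.1, fun t ht => hω.2.2 t (Finset.mem_Icc.mpr
      ⟨(Finset.mem_Icc.mp ht).1, le_trans (Finset.mem_Icc.mp ht).2 (by omega)⟩)⟩
  have hfi : ⋂ m, f m = {ω | I 0 ω = true ∧ I (s:ℤ) ω = true ∧
      ∀ t : ℤ, (s:ℤ) < t → I t ω = false} := by
    ext ω
    simp only [Set.mem_iInter, hf, Set.mem_setOf_eq]
    constructor
    · intro h
      refine ⟨(h 0).1, (h 0).2.1, fun t ht => ?_⟩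
      exact (h (t - s).toNat).2.2 t (Finset.mem_Icc.mpr ⟨by omega, by omega⟩)
    · intro h m
      exact ⟨h.1, h.2.1, fun t ht => h.2.2 t (by have := Finset.mem_Icc.mp ht; omega)⟩
  have hgi : ⋂ m, g m = {ω | I 0 ω = true ∧ I (-(s:ℤ)) ω = true ∧
      ∀ t : ℤ, 0 < t → I t ω = false} := by
    ext ω
    simp only [Set.mem_iInter, hg, Set.mem_setOf_eq]
    constructor
    · intro h
      refine ⟨(h 0).1, (h 0).2.1, fun t ht => ?_⟩
      exact (h t.toNat).2.2 t (Finset.mem_Icc.mpr ⟨by omega, by omega⟩)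
    · intro h m
      exact ⟨h.1, h.2.1, fun t ht => h.2.2 t (by have := Finset.mem_Icc.mp ht; omega)⟩
  rw [← hfi, ← hgi]
  rw [hfa.measure_iInter (fun m => (hfm m).nullMeasurableSet)
    ⟨0, measure_ne_top _ _⟩]
  rw [hga.measure_iInter (fun m => (hgm m).nullMeasurableSet)
    ⟨0, measure_ne_top _ _⟩]
  exact iInf_congr (fun m => timechange_fin P I Pn hPn In hpos hstat hconv s m)
lemma key_dagger {Ω : Type*} [MeasurableSpace Ω] (P : Measure Ω) [IsProbabilityMeasure P]
    (I : ℤ → Ω → Bool) (hI : ∀ t, Measurable (I t))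
    {Ωn : ℕ → Type*} [∀ n, MeasurableSpace (Ωn n)]
    (Pn : ∀ n, Measure (Ωn n)) (hPn : ∀ n, IsProbabilityMeasure (Pn n))
    (In : ∀ n, ℤ → Ωn n → Bool)
    (hpos : ∀ n, 0 < Pn n {ω | In n 0 ω = true})
    (hstat : ∀ n (F : Finset ℤ) (ε : ℤ → Bool) (k : ℤ),
      Pn n {ω | ∀ t ∈ F, In n t ω = ε t} = Pn n {ω | ∀ t ∈ F, In n (t + k) ω = ε t})
    (hconv : ∀ (F : Finset ℤ) (ε : ℤ → Bool),
      Tendsto (fun n =>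
          Pn n ({ω | ∀ t ∈ F, In n t ω = ε t} ∩ {ω | In n 0 ω = true})
            / Pn n {ω | In n 0 ω = true}) atTop
        (nhds (P {ω | ∀ t ∈ F, I t ω = ε t}))) :
    P {ω | SplusFn I ω ≠ ⊤}
      = ∑' s : ℤ, P ({ω | I (-s) ω = true} ∩ {ω | SplusFn I ω = 0}) := by
  have hP0 : P {ω | I 0 ω = true} = 1 := P_I0 P I Pn hPn In hpos hconv
  have hP0c : P {ω | I 0 ω = true}ᶜ = 0 :=
    (prob_compl_eq_zero_iff (meas_cyl I hI 0 true)).mpr hP0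
  set A : ℤ → Set Ω := fun s => {ω | I s ω = true ∧ ∀ t, s < t → I t ω = false} with hA
  have hAm : ∀ s, MeasurableSet (A s) := by
    intro s
    have : A s = {ω | I s ω = true} ∩ ⋂ t : ℤ, {ω | s < t → I t ω = false} := by
      ext ω; simp [hA]
    rw [this]
    refine (meas_cyl I hI s true).inter (MeasurableSet.iInter (fun t => ?_))
    by_cases h : s < t
    · simp only [h, true_implies]; exact meas_cyl I hI t false
    · simp only [h, false_implies]; exact MeasurableSet.univ.congr (by ext ω; simp)
  have hAd : Pairwise (Function.onFun Disjoint A) := by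
    intro s s' hne
    refine Set.disjoint_left.mpr (fun ω h1 h2 => ?_)
    rcases lt_or_gt_of_ne hne with h | h
    · have hb : I s' ω = true := h2.1
      rw [h1.2 s' h] at hb; simp at hb
    · have hb : I s ω = true := h1.1
      rw [h2.2 s h] at hb; simp at hb
  have hsub1 : ∀ s, A s ⊆ {ω | SplusFn I ω ≠ ⊤} := by
    intro s ω hω
    simp only [Set.mem_setOf_eq, SplusFn, Set.encard_ne_top_iff]
    refine Set.Finite.subset (Set.finite_Icc 1 s) (fun t ht => ?_)
    refine ⟨ht.1, ?_⟩
    by_contra hc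
    push_neg at hc
    have hb : I t ω = true := ht.2
    rw [hω.2 t hc] at hb; simp at hb
  have hsub2 : {ω | SplusFn I ω ≠ ⊤} ∩ {ω | I 0 ω = true} ⊆ ⋃ s, A s := by
    intro ω hω
    have hfin : {t : ℤ | 0 ≤ t ∧ I t ω = true}.Finite := by
      have h1 : {t : ℤ | 0 < t ∧ I t ω = true}.Finite := by
        have := hω.1; simp only [Set.mem_setOf_eq, SplusFn, Set.encard_ne_top_iff] at this
        exact this
      refine Set.Finite.subset (h1.union (Set.finite_singleton 0)) (fun t ht => ?_)
      rcases eq_or_lt_of_le ht.1 with h | h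
      · exact Or.inr (by simp [← h])
      · exact Or.inl ⟨h, ht.2⟩
    have hnonempty : {t : ℤ | 0 ≤ t ∧ I t ω = true}.Nonempty := ⟨0, le_refl 0, hω.2⟩
    obtain ⟨a, ha, hmax⟩ := Set.Finite.exists_maximalFor id _ hfin hnonempty
    refine Set.mem_iUnion.mpr ⟨a, ha.2, fun t ht => ?_⟩
    by_contra hc
    rw [Bool.not_eq_false] at hc
    have ha1 : (0:ℤ) ≤ a := ha.1
    have htm : t ∈ {t : ℤ | 0 ≤ t ∧ I t ω = true} := ⟨by omega, hc⟩
    have := hmax htm (by simpa using le_of_lt ht)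
    simp at this; omega
  have hU : P {ω | SplusFn I ω ≠ ⊤} = P (⋃ s, A s) := by
    refine le_antisymm ?_ (measure_mono (Set.iUnion_subset hsub1))
    calc P {ω | SplusFn I ω ≠ ⊤}
        = P ({ω | SplusFn I ω ≠ ⊤} ∩ {ω | I 0 ω = true}) :=
          (meas_inter_full P (meas_cyl I hI 0 true) hP0).symm
      _ ≤ P (⋃ s, A s) := measure_mono hsub2
  rw [hU, measure_iUnion hAd hAm]
  refine tsum_congr (fun s => ?_)
  rcases le_or_gt 0 s with hs | hs
  · -- s ≥ 0 : use timechange_inf with s.toNat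
    have htc := timechange_inf P I hI Pn hPn In hpos hstat hconv s.toNat
    rw [show ((s.toNat : ℤ)) = s by omega] at htc
    have e1 : {ω | I 0 ω = true ∧ I s ω = true ∧ ∀ t : ℤ, s < t → I t ω = false}
        = A s ∩ {ω | I 0 ω = true} := by
      ext ω; simp only [hA, Set.mem_inter_iff, Set.mem_setOf_eq]; tauto
    have e2 : {ω | I 0 ω = true ∧ I (-s) ω = true ∧ ∀ t : ℤ, 0 < t → I t ω = false}
        = ({ω | I (-s) ω = true} ∩ {ω | SplusFn I ω = 0}) ∩ {ω | I 0 ω = true} := by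
      ext ω
      simp only [Set.mem_inter_iff, Set.mem_setOf_eq, splus_zero_iff]
      tauto
    rw [e1, e2, meas_inter_full P (meas_cyl I hI 0 true) hP0,
      meas_inter_full P (meas_cyl I hI 0 true) hP0] at htc
    exact htc
  · -- s < 0 : both sides are zero
    have hz1 : P (A s) = 0 := by
      refine measure_mono_null (fun ω hω => ?_) hP0c
      have := hω.2 0 hs
      simp only [Set.mem_compl_iff, Set.mem_setOf_eq]
      rw [this]; simp
    have hz2 : ({ω | I (-s) ω = true} ∩ {ω | SplusFn I ω = 0}) = ∅ := by
      refine Set.eq_empty_iff_forall_notMem.mpr (fun ω hω => ?_)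
      have h1 := (splus_zero_iff I ω).mp hω.2 (-s) (by omega)
      rw [hω.1] at h1; simp at h1
    rw [hz1, hz2, measure_empty]
lemma neg_event_eq {α : Type*} (K : ℤ → α → Bool) (F : Finset ℤ) (ε : ℤ → Bool) :
    {ω : α | ∀ t ∈ F.image (Neg.neg : ℤ → ℤ), K t ω = ε (-t)}
    = {ω : α | ∀ t ∈ F, K (-t) ω = ε t} := by
  ext ω
  constructor
  · intro h t ht
    have := h (-t) (Finset.mem_image.mpr ⟨t, ht, rfl⟩)
    rwa [neg_neg] at this
  · intro h t ht
    obtain ⟨u, hu, rfl⟩ := Finset.mem_image.mp ht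
    rw [neg_neg]
    exact h u hu

lemma key_ddagger {Ω : Type*} [MeasurableSpace Ω] (P : Measure Ω) [IsProbabilityMeasure P]
    (I : ℤ → Ω → Bool) (hI : ∀ t, Measurable (I t))
    {Ωn : ℕ → Type*} [∀ n, MeasurableSpace (Ωn n)]
    (Pn : ∀ n, Measure (Ωn n)) (hPn : ∀ n, IsProbabilityMeasure (Pn n))
    (In : ∀ n, ℤ → Ωn n → Bool)
    (hpos : ∀ n, 0 < Pn n {ω | In n 0 ω = true})
    (hstat : ∀ n (F : Finset ℤ) (ε : ℤ → Bool) (k : ℤ),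
      Pn n {ω | ∀ t ∈ F, In n t ω = ε t} = Pn n {ω | ∀ t ∈ F, In n (t + k) ω = ε t})
    (hconv : ∀ (F : Finset ℤ) (ε : ℤ → Bool),
      Tendsto (fun n =>
          Pn n ({ω | ∀ t ∈ F, In n t ω = ε t} ∩ {ω | In n 0 ω = true})
            / Pn n {ω | In n 0 ω = true}) atTop
        (nhds (P {ω | ∀ t ∈ F, I t ω = ε t}))) :
    P {ω | SminusFn I ω ≠ ⊤}
      = ∑' s : ℤ, P ({ω | I s ω = true} ∩ {ω | SminusFn I ω = 0}) := by
  set I' : ℤ → Ω → Bool := fun t => I (-t) with hI'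
  set In' : ∀ n, ℤ → Ωn n → Bool := fun n t => In n (-t) with hIn'
  have hI'm : ∀ t, Measurable (I' t) := fun t => hI (-t)
  have hzero : ∀ n, {ω | In' n 0 ω = true} = {ω | In n 0 ω = true} := by
    intro n; rw [hIn']; norm_num
  have hpos' : ∀ n, 0 < Pn n {ω | In' n 0 ω = true} := by
    intro n; rw [hzero n]; exact hpos n
  have hstat' : ∀ n (F : Finset ℤ) (ε : ℤ → Bool) (k : ℤ),
      Pn n {ω | ∀ t ∈ F, In' n t ω = ε t} = Pn n {ω | ∀ t ∈ F, In' n (t + k) ω = ε t} := by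
    intro n F ε k
    have h := hstat n (F.image (Neg.neg : ℤ → ℤ)) (fun t => ε (-t)) (-k)
    rw [neg_event_eq (In n) F ε] at h
    have e2 : {ω | ∀ t ∈ F.image (Neg.neg : ℤ → ℤ), In n (t + -k) ω = ε (-t)}
        = {ω | ∀ t ∈ F, In' n (t + k) ω = ε t} := by
      ext ω
      constructor
      · intro h2 t ht
        have := h2 (-t) (Finset.mem_image.mpr ⟨t, ht, rfl⟩)
        rw [neg_neg] at this
        show In n (-(t + k)) ω = ε t
        rw [show -(t + k) = -t + -k by ring]
        exact this
      · intro h2 t ht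
        obtain ⟨u, hu, rfl⟩ := Finset.mem_image.mp ht
        rw [neg_neg]
        have h3 : In n (-(u + k)) ω = ε u := h2 u hu
        rw [show -u + -k = -(u + k) by ring]
        exact h3
    rw [e2] at h
    exact h
  have hconv' : ∀ (F : Finset ℤ) (ε : ℤ → Bool),
      Tendsto (fun n =>
          Pn n ({ω | ∀ t ∈ F, In' n t ω = ε t} ∩ {ω | In' n 0 ω = true})
            / Pn n {ω | In' n 0 ω = true}) atTop
        (nhds (P {ω | ∀ t ∈ F, I' t ω = ε t})) := by
    intro F ε
    have h := hconv (F.image (Neg.neg : ℤ → ℤ)) (fun t => ε (-t))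
    have e1 : ∀ n, {ω | ∀ t ∈ F.image (Neg.neg : ℤ → ℤ), In n t ω = ε (-t)}
        = {ω | ∀ t ∈ F, In' n t ω = ε t} := fun n => neg_event_eq (In n) F ε
    have efun : (fun n => Pn n ({ω | ∀ t ∈ F, In' n t ω = ε t} ∩ {ω | In' n 0 ω = true})
          / Pn n {ω | In' n 0 ω = true})
        = fun n => Pn n ({ω | ∀ t ∈ F.image (Neg.neg : ℤ → ℤ), In n t ω = ε (-t)}
          ∩ {ω | In n 0 ω = true}) / Pn n {ω | In n 0 ω = true} := by
      funext n
      rw [hzero n, e1 n]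
    rw [efun]
    have e4 : {ω | ∀ t ∈ F, I' t ω = ε t} = {ω | ∀ t ∈ F, I (-t) ω = ε t} := rfl
    rw [e4, ← neg_event_eq I F ε]
    exact h
  have hkey := key_dagger P I' hI'm Pn hPn In' hpos' hstat' hconv'
  have hsp : ∀ ω, SplusFn I' ω = SminusFn I ω := fun ω => (sminus_eq_splus_neg I ω).symm
  have es1 : {ω | SplusFn I' ω ≠ ⊤} = {ω | SminusFn I ω ≠ ⊤} := by
    ext ω; rw [Set.mem_setOf_eq, Set.mem_setOf_eq, hsp ω]
  have es2 : ∀ s : ℤ, ({ω | I' (-s) ω = true} ∩ {ω | SplusFn I' ω = 0})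
      = ({ω | I s ω = true} ∩ {ω | SminusFn I ω = 0}) := by
    intro s
    have : {ω | I' (-s) ω = true} = {ω | I s ω = true} := by
      rw [hI']; norm_num
    rw [this]
    congr 1
    ext ω; rw [Set.mem_setOf_eq, Set.mem_setOf_eq, hsp ω]
  rw [es1] at hkey
  rw [hkey]
  exact tsum_congr (fun s => by rw [es2 s])

theorem theta_zero_iff_infinite_cluster'
    {Ω : Type*} [MeasurableSpace Ω] (P : Measure Ω) [IsProbabilityMeasure P]
    (I : ℤ → Ω → Bool) (hI : ∀ t, Measurable (I t))
    {Ωn : ℕ → Type*} [∀ n, MeasurableSpace (Ωn n)]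
    (Pn : ∀ n, Measure (Ωn n)) (hPn : ∀ n, IsProbabilityMeasure (Pn n))
    (In : ∀ n, ℤ → Ωn n → Bool) (hIn : ∀ n t, Measurable (In n t))
    (hpos : ∀ n, 0 < Pn n {ω | In n 0 ω = true})
    (hstat : ∀ n (F : Finset ℤ) (ε : ℤ → Bool) (k : ℤ),
      Pn n {ω | ∀ t ∈ F, In n t ω = ε t} = Pn n {ω | ∀ t ∈ F, In n (t + k) ω = ε t})
    (hconv : ∀ (F : Finset ℤ) (ε : ℤ → Bool),
      Tendsto (fun n =>
          Pn n ({ω | ∀ t ∈ F, In n t ω = ε t} ∩ {ω | In n 0 ω = true})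
            / Pn n {ω | In n 0 ω = true}) atTop
        (nhds (P {ω | ∀ t ∈ F, I t ω = ε t})))
    :
    ((P {ω | SplusFn I ω = 0}) = 0 ↔ P {ω | SplusFn I ω = ⊤} = 1)
    ∧ (P {ω | SplusFn I ω = ⊤} = 1 ↔ P {ω | SminusFn I ω = ⊤} = 1)
    ∧ (P {ω | SplusFn I ω = ⊤} = 1 ↔ P {ω | SiFn I ω = ⊤} = 1) := by
  have hP0 : P {ω | I 0 ω = true} = 1 := P_I0 P I Pn hPn In hpos hconv
  have hdag := key_dagger P I hI Pn hPn In hpos hstat hconv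
  have hddag := key_ddagger P I hI Pn hPn In hpos hstat hconv
  have hcp : P {ω | SplusFn I ω ≠ ⊤} = 0 ↔ P {ω | SplusFn I ω = ⊤} = 1 := by
    have hce : {ω | SplusFn I ω ≠ ⊤} = {ω | SplusFn I ω = ⊤}ᶜ := rfl
    rw [hce, prob_compl_eq_zero_iff (meas_splus_top I hI)]
  have hcm : P {ω | SminusFn I ω ≠ ⊤} = 0 ↔ P {ω | SminusFn I ω = ⊤} = 1 := by
    have hce : {ω | SminusFn I ω ≠ ⊤} = {ω | SminusFn I ω = ⊤}ᶜ := rfl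
    rw [hce, prob_compl_eq_zero_iff (meas_sminus_top I hI)]
  -- part (i)
  have part1 : (P {ω | SplusFn I ω = 0}) = 0 ↔ P {ω | SplusFn I ω = ⊤} = 1 := by
    constructor
    · intro h0
      refine hcp.mp ?_
      rw [hdag]
      refine (ENNReal.tsum_eq_zero).mpr (fun s => ?_)
      exact measure_mono_null Set.inter_subset_right h0
    · intro h1
      have hz := hcp.mpr h1
      rw [hdag] at hz
      have hterm := ENNReal.le_tsum (f := fun s : ℤ =>
        P ({ω | I (-s) ω = true} ∩ {ω | SplusFn I ω = 0})) 0
      rw [hz] at hterm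
      have hterm0 : P ({ω | I (-(0:ℤ)) ω = true} ∩ {ω | SplusFn I ω = 0}) = 0 :=
        le_antisymm hterm zero_le
      rw [neg_zero] at hterm0
      rw [← meas_inter_full P (meas_cyl I hI 0 true) hP0 (X := {ω | SplusFn I ω = 0}),
        Set.inter_comm]
      exact hterm0
  refine ⟨part1, ?_, ?_⟩
  · -- part (ii)
    constructor
    · intro h1
      refine hcm.mp ?_
      rw [hddag]
      set C : Set Ω := {ω | SminusFn I ω = 0} ∩ {ω | SplusFn I ω = ⊤} with hC
      have hCm : MeasurableSet C := (meas_sminus_zero I hI).inter (meas_splus_top I hI)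
      have hCzero : P C = 0 := by
        refine infsum_zero P I hI hCm (fun ω hω => ?_) ?_
        · have : {t : ℤ | 0 < t ∧ I t ω = true}.Infinite := by
            rw [← Set.encard_eq_top_iff]; exact hω.2
          exact this.mono (fun t ht => ht.2)
        · refine ne_top_of_le_ne_top (by simp : (1:ℝ≥0∞) ≠ ⊤) ?_
          calc ∑' s : ℤ, P ({ω | I s ω = true} ∩ C)
              ≤ ∑' s : ℤ, P ({ω | I s ω = true} ∩ {ω | SminusFn I ω = 0}) := by
                refine ENNReal.tsum_le_tsum (fun s => measure_mono ?_)
                exact Set.inter_subset_inter_right _ (Set.inter_subset_left)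
            _ = P {ω | SminusFn I ω ≠ ⊤} := hddag.symm
            _ ≤ 1 := prob_le_one
      refine (ENNReal.tsum_eq_zero).mpr (fun s => le_antisymm ?_ zero_le)
      calc P ({ω | I s ω = true} ∩ {ω | SminusFn I ω = 0})
          = P (({ω | I s ω = true} ∩ {ω | SminusFn I ω = 0}) ∩ {ω | SplusFn I ω = ⊤}) :=
            (meas_inter_full P (meas_splus_top I hI) h1).symm
        _ ≤ P C := measure_mono (fun ω hω => ⟨hω.1.2, hω.2⟩)
        _ = 0 := hCzero
    · intro h1
      refine hcp.mp ?_
      rw [hdag]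
      set C : Set Ω := {ω | SplusFn I ω = 0} ∩ {ω | SminusFn I ω = ⊤} with hC
      have hCm : MeasurableSet C := (meas_splus_zero I hI).inter (meas_sminus_top I hI)
      have hCzero : P C = 0 := by
        refine infsum_zero P (fun s => I (-s)) (fun s => hI (-s)) hCm (fun ω hω => ?_) ?_
        · have : {t : ℤ | 0 < t ∧ I (-t) ω = true}.Infinite := by
            rw [← Set.encard_eq_top_iff]
            rw [show {t : ℤ | 0 < t ∧ I (-t) ω = true}.encard = SplusFn (fun t => I (-t)) ω from rfl]
            rw [← sminus_eq_splus_neg I ω]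
            exact hω.2
          exact this.mono (fun t ht => ht.2)
        · refine ne_top_of_le_ne_top (by simp : (1:ℝ≥0∞) ≠ ⊤) ?_
          calc ∑' s : ℤ, P ({ω | I (-s) ω = true} ∩ C)
              ≤ ∑' s : ℤ, P ({ω | I (-s) ω = true} ∩ {ω | SplusFn I ω = 0}) := by
                refine ENNReal.tsum_le_tsum (fun s => measure_mono ?_)
                exact Set.inter_subset_inter_right _ (Set.inter_subset_left)
            _ = P {ω | SplusFn I ω ≠ ⊤} := hdag.symm
            _ ≤ 1 := prob_le_one
      refine (ENNReal.tsum_eq_zero).mpr (fun s => le_antisymm ?_ zero_le)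
      calc P ({ω | I (-s) ω = true} ∩ {ω | SplusFn I ω = 0})
          = P (({ω | I (-s) ω = true} ∩ {ω | SplusFn I ω = 0}) ∩ {ω | SminusFn I ω = ⊤}) :=
            (meas_inter_full P (meas_sminus_top I hI) h1).symm
        _ ≤ P C := measure_mono (fun ω hω => ⟨hω.1.2, hω.2⟩)
        _ = 0 := hCzero
  · -- part (iii)
    constructor
    · intro h1
      refine le_antisymm prob_le_one ?_
      calc (1:ℝ≥0∞) = P {ω | SplusFn I ω = ⊤} := h1.symm
        _ ≤ P {ω | SiFn I ω = ⊤} := by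
            rw [si_top_set]
            exact measure_mono Set.subset_union_left
    · intro h1
      refine hcp.mp ?_
      rw [hdag]
      set C : Set Ω := {ω | SplusFn I ω = 0} ∩ {ω | SiFn I ω = ⊤} with hC
      have hCm : MeasurableSet C := (meas_splus_zero I hI).inter (meas_si_top I hI)
      have hCzero : P C = 0 := by
        refine infsum_zero P (fun s => I (-s)) (fun s => hI (-s)) hCm (fun ω hω => ?_) ?_
        · have hminus : SminusFn I ω = ⊤ := by
            rcases (si_top_iff I ω).mp hω.2 with h | h
            · rw [hω.1] at h; simp at h
            · exact h
          have : {t : ℤ | 0 < t ∧ I (-t) ω = true}.Infinite := by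
            rw [← Set.encard_eq_top_iff]
            rw [show {t : ℤ | 0 < t ∧ I (-t) ω = true}.encard = SplusFn (fun t => I (-t)) ω from rfl]
            rw [← sminus_eq_splus_neg I ω]
            exact hminus
          exact this.mono (fun t ht => ht.2)
        · refine ne_top_of_le_ne_top (by simp : (1:ℝ≥0∞) ≠ ⊤) ?_
          calc ∑' s : ℤ, P ({ω | I (-s) ω = true} ∩ C)
              ≤ ∑' s : ℤ, P ({ω | I (-s) ω = true} ∩ {ω | SplusFn I ω = 0}) := by
                refine ENNReal.tsum_le_tsum (fun s => measure_mono ?_)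
                exact Set.inter_subset_inter_right _ (Set.inter_subset_left)
            _ = P {ω | SplusFn I ω ≠ ⊤} := hdag.symm
            _ ≤ 1 := prob_le_one
      refine (ENNReal.tsum_eq_zero).mpr (fun s => le_antisymm ?_ zero_le)
      calc P ({ω | I (-s) ω = true} ∩ {ω | SplusFn I ω = 0})
          = P (({ω | I (-s) ω = true} ∩ {ω | SplusFn I ω = 0}) ∩ {ω | SiFn I ω = ⊤}) :=
            (meas_inter_full P (meas_si_top I hI) h1).symm
        _ ≤ P C := measure_mono (fun ω hω => ⟨hω.1.2, hω.2⟩)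
        _ = 0 := hCzero

/-- Theorem 4.2(a): under Assumption 1, the statements `θ = P(S₊ⁱ = 0) = 0`,
`P(S₊ⁱ = ∞) = 1` (equivalently `P(S₋ⁱ = ∞) = 1`) and `P(Sⁱ = ∞) = 1` are
equivalent. -/
theorem theta_zero_iff_infinite_cluster
    {Ω : Type*} [MeasurableSpace Ω] (P : Measure Ω) [IsProbabilityMeasure P]
    (I : ℤ → Ω → Bool) (hI : ∀ t, Measurable (I t))
    {Ωn : ℕ → Type*} [∀ n, MeasurableSpace (Ωn n)]
    (Pn : ∀ n, Measure (Ωn n)) (hPn : ∀ n, IsProbabilityMeasure (Pn n))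
    (In : ∀ n, ℤ → Ωn n → Bool) (hIn : ∀ n t, Measurable (In n t))
    -- `P(I₀ⁿ = 1) > 0` for all `n`
    (hpos : ∀ n, 0 < Pn n {ω | In n 0 ω = true})
    -- stationarity of each `(Iₜⁿ)ₜ`
    (hstat : ∀ n (F : Finset ℤ) (ε : ℤ → Bool) (k : ℤ),
      Pn n {ω | ∀ t ∈ F, In n t ω = ε t} = Pn n {ω | ∀ t ∈ F, In n (t + k) ω = ε t})
    -- convergence of the conditional finite-dimensional distributions
    (hconv : ∀ (F : Finset ℤ) (ε : ℤ → Bool),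
      Tendsto (fun n =>
          Pn n ({ω | ∀ t ∈ F, In n t ω = ε t} ∩ {ω | In n 0 ω = true})
            / Pn n {ω | In n 0 ω = true}) atTop
        (nhds (P {ω | ∀ t ∈ F, I t ω = ε t})))

    :
    ((P {ω | SplusFn I ω = 0}) = 0 ↔ P {ω | SplusFn I ω = ⊤} = 1)
    ∧ (P {ω | SplusFn I ω = ⊤} = 1 ↔ P {ω | SminusFn I ω = ⊤} = 1)
    ∧ (P {ω | SplusFn I ω = ⊤} = 1 ↔ P {ω | SiFn I ω = ⊤} = 1) := by
  exact theta_zero_iff_infinite_cluster' P I hI Pn hPn In hIn hpos hstat hconv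
end
end
end

section
/- Under Assumption 1, θ := P(S₊ⁱ = 0) > 0 if and only if P(Sⁱ < ∞) > 0; moreover, if θ > 0, then the typical cluster size is almost surely finite: P(Sⁱ < ∞ | S₋ⁱ = 0) = 1. -/
open MeasureTheory Filter Set ENNReal

noncomputable section

private lemma measHelp {Ω : Type*} [MeasurableSpace Ω] {I : ℤ → Ω → Bool}
    (hI : ∀ t, Measurable (I t)) (a b : ℤ) (p : ℤ → Prop) :
    MeasurableSet {ω | I a ω = true ∧ I b ω = true ∧ ∀ t : ℤ, p t → I t ω = false} := by
  have h1 : ∀ (c : ℤ) (v : Bool), MeasurableSet {ω | I c ω = v} := by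
    intro c v
    have h : {ω | I c ω = v} = I c ⁻¹' {v} := by ext ω; simp
    rw [h]; exact (hI c) (measurableSet_singleton v)
  have h : {ω | I a ω = true ∧ I b ω = true ∧ ∀ t : ℤ, p t → I t ω = false}
      = {ω | I a ω = true} ∩ ({ω | I b ω = true} ∩ ⋂ t : ℤ, ⋂ (_ : p t), {ω | I t ω = false}) := by
    ext ω; simp only [mem_inter_iff, mem_iInter, mem_setOf_eq]
  rw [h]
  exact (h1 a true).inter ((h1 b true).inter
    (MeasurableSet.iInter fun t => MeasurableSet.iInter fun _ => h1 t false))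

private lemma measHelp2 {Ω : Type*} [MeasurableSpace Ω] {I : ℤ → Ω → Bool}
    (hI : ∀ t, Measurable (I t)) (a b : ℤ) (p q : ℤ → Prop) :
    MeasurableSet {ω | I a ω = true ∧ I b ω = true ∧ ∀ t : ℤ, p t → q t → I t ω = false} := by
  have h : {ω | I a ω = true ∧ I b ω = true ∧ ∀ t : ℤ, p t → q t → I t ω = false}
      = {ω | I a ω = true ∧ I b ω = true ∧ ∀ t : ℤ, (p t ∧ q t) → I t ω = false} := by
    ext ω; simp only [mem_setOf_eq, and_imp]
  rw [h]; exact measHelp hI a b _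

private lemma shiftEq {Ω : Type*} [MeasurableSpace Ω] (P : Measure Ω) (I : ℤ → Ω → Bool)
    (hID : ∀ (F : Finset ℤ) (ε : ℤ → Bool) (k : ℤ), k ∈ F → ε k = true → (0:ℤ) ∈ F →
      ε 0 = true →
      P {ω | ∀ t ∈ F, I t ω = ε t} = P {ω | ∀ t ∈ F, I (t - k) ω = ε t})
    (a lo hi : ℤ) (h : ∀ t, lo ≤ t → t ≤ hi → t ≠ a ∧ t ≠ 0) :
    P {ω | I a ω = true ∧ I 0 ω = true ∧ ∀ t, lo ≤ t → t ≤ hi → I t ω = false}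
      = P {ω | I (-a) ω = true ∧ I 0 ω = true ∧
          ∀ t, lo - a ≤ t → t ≤ hi - a → I t ω = false} := by
  classical
  set F : Finset ℤ := insert a (insert 0 (Finset.Icc lo hi)) with hF
  set ε : ℤ → Bool := fun t => decide (t = a) || decide (t = 0) with hε
  have hmem : ∀ t : ℤ, t ∈ F ↔ t = a ∨ t = 0 ∨ (lo ≤ t ∧ t ≤ hi) := by
    intro t; simp [hF, Finset.mem_insert, Finset.mem_Icc]
  have e1 : {ω | ∀ t ∈ F, I t ω = ε t}
      = {ω | I a ω = true ∧ I 0 ω = true ∧ ∀ t, lo ≤ t → t ≤ hi → I t ω = false} := by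
    ext ω
    simp only [mem_setOf_eq]
    constructor
    · intro hω
      refine ⟨?_, ?_, ?_⟩
      · have := hω a ((hmem a).mpr (Or.inl rfl)); simpa [hε] using this
      · have := hω 0 ((hmem 0).mpr (Or.inr (Or.inl rfl))); simpa [hε] using this
      · intro t h1 h2
        have hne := h t h1 h2
        have := hω t ((hmem t).mpr (Or.inr (Or.inr ⟨h1, h2⟩)))
        simpa [hε, hne.1, hne.2] using this
    · rintro ⟨h1, h2, h3⟩ t ht
      rcases (hmem t).mp ht with rfl | rfl | ⟨hl, hr⟩
      · simpa [hε] using h1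
      · simpa [hε] using h2
      · have hne := h t hl hr
        simpa [hε, hne.1, hne.2] using h3 t hl hr
  have e2 : {ω | ∀ t ∈ F, I (t - a) ω = ε t}
      = {ω | I (-a) ω = true ∧ I 0 ω = true ∧
          ∀ t, lo - a ≤ t → t ≤ hi - a → I t ω = false} := by
    ext ω
    simp only [mem_setOf_eq]
    constructor
    · intro hω
      refine ⟨?_, ?_, ?_⟩
      · have := hω 0 ((hmem 0).mpr (Or.inr (Or.inl rfl)))
        simpa [hε, zero_sub] using this
      · have := hω a ((hmem a).mpr (Or.inl rfl))
        simpa [hε, sub_self] using this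
      · intro s hs1 hs2
        have hne := h (s + a) (by omega) (by omega)
        have := hω (s + a) ((hmem _).mpr (Or.inr (Or.inr ⟨by omega, by omega⟩)))
        simpa [hε, hne.1, hne.2, add_sub_cancel_right] using this
    · rintro ⟨h1, h2, h3⟩ t ht
      rcases (hmem t).mp ht with rfl | rfl | ⟨hl, hr⟩
      · simpa [hε, sub_self] using h2
      · simpa [hε, zero_sub] using h1
      · have hne := h t hl hr
        simpa [hε, hne.1, hne.2] using h3 (t - a) (by omega) (by omega)
  rw [← e1, ← e2]
  exact hID F ε a ((hmem a).mpr (Or.inl rfl)) (by simp [hε])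
    ((hmem 0).mpr (Or.inr (Or.inl rfl))) (by simp [hε])

private lemma leftEq {Ω : Type*} [MeasurableSpace Ω] (P : Measure Ω) [IsFiniteMeasure P]
    (I : ℤ → Ω → Bool) (hI : ∀ t, Measurable (I t))
    (hID : ∀ (F : Finset ℤ) (ε : ℤ → Bool) (k : ℤ), k ∈ F → ε k = true → (0:ℤ) ∈ F →
      ε 0 = true →
      P {ω | ∀ t ∈ F, I t ω = ε t} = P {ω | ∀ t ∈ F, I (t - k) ω = ε t}) (k : ℕ) :
    P {ω | I (-(k:ℤ)) ω = true ∧ I 0 ω = true ∧ ∀ t : ℤ, t ≤ -(k:ℤ) - 1 → I t ω = false}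
      = P {ω | I (k:ℤ) ω = true ∧ I 0 ω = true ∧ ∀ t : ℤ, t ≤ -1 → I t ω = false} := by
  set sL : ℕ → Set Ω := fun m => {ω | I (-(k:ℤ)) ω = true ∧ I 0 ω = true ∧
      ∀ t : ℤ, -(k:ℤ) - m ≤ t → t ≤ -(k:ℤ) - 1 → I t ω = false} with hsL
  set sR : ℕ → Set Ω := fun m => {ω | I (k:ℤ) ω = true ∧ I 0 ω = true ∧
      ∀ t : ℤ, -(m:ℤ) ≤ t → t ≤ -1 → I t ω = false} with hsR
  have hLanti : Antitone sL := by
    intro m m' hmm' ω hω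
    exact ⟨hω.1, hω.2.1, fun t h1 h2 => hω.2.2 t (by omega) h2⟩
  have hRanti : Antitone sR := by
    intro m m' hmm' ω hω
    exact ⟨hω.1, hω.2.1, fun t h1 h2 => hω.2.2 t (by omega) h2⟩
  have hLmeas : ∀ m, NullMeasurableSet (sL m) P := fun m =>
    (measHelp2 hI _ _ _ _).nullMeasurableSet
  have hRmeas : ∀ m, NullMeasurableSet (sR m) P := fun m =>
    (measHelp2 hI _ _ _ _).nullMeasurableSet
  have hLint : ⋂ m, sL m = {ω | I (-(k:ℤ)) ω = true ∧ I 0 ω = true ∧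
      ∀ t : ℤ, t ≤ -(k:ℤ) - 1 → I t ω = false} := by
    ext ω; simp only [hsL, mem_iInter, mem_setOf_eq]
    constructor
    · intro h
      exact ⟨(h 0).1, (h 0).2.1, fun t ht => (h ((-(k:ℤ) - t).toNat)).2.2 t (by omega) ht⟩
    · intro h m; exact ⟨h.1, h.2.1, fun t _ h2 => h.2.2 t h2⟩
  have hRint : ⋂ m, sR m = {ω | I (k:ℤ) ω = true ∧ I 0 ω = true ∧
      ∀ t : ℤ, t ≤ -1 → I t ω = false} := by
    ext ω; simp only [hsR, mem_iInter, mem_setOf_eq]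
    constructor
    · intro h
      exact ⟨(h 0).1, (h 0).2.1, fun t ht => (h ((-t).toNat)).2.2 t (by omega) ht⟩
    · intro h m; exact ⟨h.1, h.2.1, fun t _ h2 => h.2.2 t h2⟩
  have hstep : ∀ m, P (sL m) = P (sR m) := by
    intro m
    have h2 := shiftEq P I hID (-(k:ℤ)) (-(k:ℤ) - m) (-(k:ℤ) - 1)
      (fun t h1 h2 => ⟨by omega, by omega⟩)
    simp only [hsL, hsR]
    rw [h2]
    congr 1
    ext ω; simp only [mem_setOf_eq, neg_neg]
    constructor <;> rintro ⟨x, y, z⟩ <;>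
      exact ⟨x, y, fun t u v => z t (by omega) (by omega)⟩
  rw [← hLint, ← hRint, hLanti.measure_iInter hLmeas ⟨0, measure_ne_top _ _⟩,
    hRanti.measure_iInter hRmeas ⟨0, measure_ne_top _ _⟩]
  exact iInf_congr hstep

private lemma rightEq {Ω : Type*} [MeasurableSpace Ω] (P : Measure Ω) [IsFiniteMeasure P]
    (I : ℤ → Ω → Bool) (hI : ∀ t, Measurable (I t))
    (hID : ∀ (F : Finset ℤ) (ε : ℤ → Bool) (k : ℤ), k ∈ F → ε k = true → (0:ℤ) ∈ F →
      ε 0 = true →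
      P {ω | ∀ t ∈ F, I t ω = ε t} = P {ω | ∀ t ∈ F, I (t - k) ω = ε t}) (k : ℕ) :
    P {ω | I (k:ℤ) ω = true ∧ I 0 ω = true ∧ ∀ t : ℤ, (k:ℤ) + 1 ≤ t → I t ω = false}
      = P {ω | I (-(k:ℤ)) ω = true ∧ I 0 ω = true ∧ ∀ t : ℤ, 1 ≤ t → I t ω = false} := by
  set sL : ℕ → Set Ω := fun m => {ω | I (k:ℤ) ω = true ∧ I 0 ω = true ∧
      ∀ t : ℤ, (k:ℤ) + 1 ≤ t → t ≤ (k:ℤ) + m → I t ω = false} with hsL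
  set sR : ℕ → Set Ω := fun m => {ω | I (-(k:ℤ)) ω = true ∧ I 0 ω = true ∧
      ∀ t : ℤ, 1 ≤ t → t ≤ (m:ℤ) → I t ω = false} with hsR
  have hLanti : Antitone sL := by
    intro m m' hmm' ω hω
    exact ⟨hω.1, hω.2.1, fun t h1 h2 => hω.2.2 t h1 (by omega)⟩
  have hRanti : Antitone sR := by
    intro m m' hmm' ω hω
    exact ⟨hω.1, hω.2.1, fun t h1 h2 => hω.2.2 t h1 (by omega)⟩
  have hLmeas : ∀ m, NullMeasurableSet (sL m) P := fun m =>
    (measHelp2 hI _ _ _ _).nullMeasurableSet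
  have hRmeas : ∀ m, NullMeasurableSet (sR m) P := fun m =>
    (measHelp2 hI _ _ _ _).nullMeasurableSet
  have hLint : ⋂ m, sL m = {ω | I (k:ℤ) ω = true ∧ I 0 ω = true ∧
      ∀ t : ℤ, (k:ℤ) + 1 ≤ t → I t ω = false} := by
    ext ω; simp only [hsL, mem_iInter, mem_setOf_eq]
    constructor
    · intro h
      exact ⟨(h 0).1, (h 0).2.1, fun t ht => (h ((t - k).toNat)).2.2 t ht (by omega)⟩
    · intro h m; exact ⟨h.1, h.2.1, fun t h1 _ => h.2.2 t h1⟩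
  have hRint : ⋂ m, sR m = {ω | I (-(k:ℤ)) ω = true ∧ I 0 ω = true ∧
      ∀ t : ℤ, 1 ≤ t → I t ω = false} := by
    ext ω; simp only [hsR, mem_iInter, mem_setOf_eq]
    constructor
    · intro h
      exact ⟨(h 0).1, (h 0).2.1, fun t ht => (h t.toNat).2.2 t ht (by omega)⟩
    · intro h m; exact ⟨h.1, h.2.1, fun t h1 _ => h.2.2 t h1⟩
  have hstep : ∀ m, P (sL m) = P (sR m) := by
    intro m
    have h2 := shiftEq P I hID (k:ℤ) ((k:ℤ) + 1) ((k:ℤ) + m)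
      (fun t h1 h2 => ⟨by omega, by omega⟩)
    simp only [hsL, hsR]
    rw [h2]
    congr 1
    ext ω; simp only [mem_setOf_eq]
    constructor <;> rintro ⟨x, y, z⟩ <;>
      exact ⟨x, y, fun t u v => z t (by omega) (by omega)⟩
  rw [← hLint, ← hRint, hLanti.measure_iInter hLmeas ⟨0, measure_ne_top _ _⟩,
    hRanti.measure_iInter hRmeas ⟨0, measure_ne_top _ _⟩]
  exact iInf_congr hstep

/-- Theorem 4.2(b), first part: under Assumption 1, `θ = P(S₊ⁱ = 0) > 0` iff
`P(Sⁱ < ∞) > 0`; moreover, if `θ > 0` then the typical cluster size is a.s.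
finite: `P(Sⁱ < ∞ | S₋ⁱ = 0) = 1`. -/
theorem theta_pos_iff_finite_cluster
    {Ω : Type*} [MeasurableSpace Ω] (P : Measure Ω) [IsProbabilityMeasure P]
    (I : ℤ → Ω → Bool) (hI : ∀ t, Measurable (I t))
    {Ωn : ℕ → Type*} [∀ n, MeasurableSpace (Ωn n)]
    (Pn : ∀ n, Measure (Ωn n)) (hPn : ∀ n, IsProbabilityMeasure (Pn n))
    (In : ∀ n, ℤ → Ωn n → Bool) (hIn : ∀ n t, Measurable (In n t))
    -- `P(I₀ⁿ = 1) > 0` for all `n`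
    (hpos : ∀ n, 0 < Pn n {ω | In n 0 ω = true})
    -- stationarity of each `(Iₜⁿ)ₜ`
    (hstat : ∀ n (F : Finset ℤ) (ε : ℤ → Bool) (k : ℤ),
      Pn n {ω | ∀ t ∈ F, In n t ω = ε t} = Pn n {ω | ∀ t ∈ F, In n (t + k) ω = ε t})
    -- convergence of the conditional finite-dimensional distributions
    (hconv : ∀ (F : Finset ℤ) (ε : ℤ → Bool),
      Tendsto (fun n =>
          Pn n ({ω | ∀ t ∈ F, In n t ω = ε t} ∩ {ω | In n 0 ω = true})
            / Pn n {ω | In n 0 ω = true}) atTop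
        (nhds (P {ω | ∀ t ∈ F, I t ω = ε t})))

    :
    (0 < (P {ω | SplusFn I ω = 0}) ↔ 0 < P {ω | SiFn I ω ≠ ⊤})
    ∧ (0 < (P {ω | SplusFn I ω = 0}) →
        P ({ω | SiFn I ω ≠ ⊤} ∩ {ω | SminusFn I ω = 0})
          / P {ω | SminusFn I ω = 0} = 1) := by
  classical
  have hms : ∀ (c : ℤ) (v : Bool), MeasurableSet {ω | I c ω = v} := by
    intro c v
    have h : {ω | I c ω = v} = I c ⁻¹' {v} := by ext ω; simp
    rw [h]; exact (hI c) (measurableSet_singleton v)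
  have hBne : ∀ n, Pn n {ω | In n 0 ω = true} ≠ 0 := fun n => (hpos n).ne'
  have hBnt : ∀ n, Pn n {ω | In n 0 ω = true} ≠ ⊤ := fun n => by
    haveI := hPn n; exact measure_ne_top _ _
  -- Step 1 : P (I₀ = 1) = 1
  have hA0 : P {ω | I 0 ω = true} = 1 := by
    have t1 := hconv {0} (fun _ => true)
    have t2 : Tendsto (fun _ : ℕ => (1 : ℝ≥0∞)) atTop
        (nhds (P {ω | ∀ t ∈ ({0} : Finset ℤ), I t ω = true})) := by
      refine t1.congr fun n => ?_
      have e : {ω | ∀ t ∈ ({0} : Finset ℤ), In n t ω = true} = {ω | In n 0 ω = true} := by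
        ext ω; simp
      rw [e, inter_self, ENNReal.div_self (hBne n) (hBnt n)]
    have h1 := tendsto_nhds_unique t2 tendsto_const_nhds
    have e : {ω | ∀ t ∈ ({0} : Finset ℤ), I t ω = true} = {ω | I 0 ω = true} := by
      ext ω; simp
    rw [← e, ← h1]
  -- Step 2 : the fundamental shift identity
  have hID : ∀ (F : Finset ℤ) (ε : ℤ → Bool) (k : ℤ), k ∈ F → ε k = true → (0:ℤ) ∈ F →
      ε 0 = true →
      P {ω | ∀ t ∈ F, I t ω = ε t} = P {ω | ∀ t ∈ F, I (t - k) ω = ε t} := by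
    intro F ε k hk hεk h0 hε0
    have t1 := hconv F ε
    have e1 : ∀ n, {ω | ∀ t ∈ F, In n t ω = ε t} ∩ {ω | In n 0 ω = true}
        = {ω | ∀ t ∈ F, In n t ω = ε t} := by
      intro n
      refine inter_eq_left.mpr fun ω hω => ?_
      have h := hω 0 h0
      rw [hε0] at h
      exact h
    simp only [e1] at t1
    set F' : Finset ℤ := F.image (fun t => t - k) with hF'
    set ε' : ℤ → Bool := fun s => ε (s + k) with hε'
    have t2 := hconv F' ε'
    have e2n : ∀ n, {ω | ∀ s ∈ F', In n s ω = ε' s} = {ω | ∀ t ∈ F, In n (t - k) ω = ε t} := by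
      intro n
      ext ω
      simp only [hF', hε', Finset.mem_image, mem_setOf_eq]
      constructor
      · intro h t ht
        have h' := h (t - k) ⟨t, ht, rfl⟩
        have hc : t - k + k = t := by omega
        rwa [hc] at h'
      · rintro h s ⟨t, ht, rfl⟩
        have hc : t - k + k = t := by omega
        rw [hc]
        exact h t ht
    have e2I : {ω | ∀ s ∈ F', I s ω = ε' s} = {ω | ∀ t ∈ F, I (t - k) ω = ε t} := by
      ext ω
      simp only [hF', hε', Finset.mem_image, mem_setOf_eq]
      constructor
      · intro h t ht
        have h' := h (t - k) ⟨t, ht, rfl⟩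
        have hc : t - k + k = t := by omega
        rwa [hc] at h'
      · rintro h s ⟨t, ht, rfl⟩
        have hc : t - k + k = t := by omega
        rw [hc]
        exact h t ht
    have e3 : ∀ n, {ω | ∀ t ∈ F, In n (t - k) ω = ε t} ∩ {ω | In n 0 ω = true}
        = {ω | ∀ t ∈ F, In n (t - k) ω = ε t} := by
      intro n
      refine inter_eq_left.mpr fun ω hω => ?_
      have h := hω k hk
      rw [sub_self, hεk] at h
      exact h
    have hfun : (fun n =>
            Pn n ({ω | ∀ t ∈ F', In n t ω = ε' t} ∩ {ω | In n 0 ω = true})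
              / Pn n {ω | In n 0 ω = true})
        = (fun n => Pn n {ω | ∀ t ∈ F, In n (t - k) ω = ε t}
              / Pn n {ω | In n 0 ω = true}) :=
      funext fun n => by rw [e2n n, e3 n]
    have hlim : P {ω | ∀ t ∈ F', I t ω = ε' t} = P {ω | ∀ t ∈ F, I (t - k) ω = ε t} := by
      rw [e2I]
    rw [hfun, hlim] at t2
    have e4 : ∀ n, Pn n {ω | ∀ t ∈ F, In n t ω = ε t}
        = Pn n {ω | ∀ t ∈ F, In n (t - k) ω = ε t} := by
      intro n
      have h := hstat n F ε (-k)
      have hc : ∀ t : ℤ, t + -k = t - k := fun t => by omega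
      simp only [hc] at h
      exact h
    simp only [e4] at t1
    exact tendsto_nhds_unique t1 t2
  -- reformulations of the three events
  have hSPset : {ω : Ω | SplusFn I ω = 0} = {ω : Ω | ∀ t : ℤ, 1 ≤ t → I t ω = false} := by
    ext ω
    have h : SplusFn I ω = 0 ↔ {t : ℤ | 0 < t ∧ I t ω = true} = ∅ := Set.encard_eq_zero
    simp only [mem_setOf_eq, h, Set.eq_empty_iff_forall_notMem, mem_setOf_eq, not_and]
    constructor
    · intro hh t ht
      cases hb : I t ω
      · rfl
      · exact absurd hb (hh t (by omega))
    · intro hh t ht hb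
      rw [hh t (by omega)] at hb
      cases hb
  have hSMset : {ω : Ω | SminusFn I ω = 0} = {ω : Ω | ∀ t : ℤ, t ≤ -1 → I t ω = false} := by
    ext ω
    have h : SminusFn I ω = 0 ↔ {t : ℤ | t < 0 ∧ I t ω = true} = ∅ := Set.encard_eq_zero
    simp only [mem_setOf_eq, h, Set.eq_empty_iff_forall_notMem, mem_setOf_eq, not_and]
    constructor
    · intro hh t ht
      cases hb : I t ω
      · rfl
      · exact absurd hb (hh t (by omega))
    · intro hh t ht hb
      rw [hh t (by omega)] at hb
      cases hb
  have hSfin : ∀ ω : Ω, SiFn I ω ≠ ⊤ ↔ {t : ℤ | I t ω = true}.Finite := fun ω =>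
    Set.encard_ne_top_iff
  -- the four families of events
  set L : ℕ → Set Ω := fun k => {ω | I (-(k:ℤ)) ω = true ∧ I 0 ω = true ∧
      ∀ t : ℤ, t ≤ -(k:ℤ) - 1 → I t ω = false} with hL
  set R : ℕ → Set Ω := fun k => {ω | I (k:ℤ) ω = true ∧ I 0 ω = true ∧
      ∀ t : ℤ, t ≤ -1 → I t ω = false} with hR
  set L' : ℕ → Set Ω := fun k => {ω | I (k:ℤ) ω = true ∧ I 0 ω = true ∧
      ∀ t : ℤ, (k:ℤ) + 1 ≤ t → I t ω = false} with hL'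
  set R' : ℕ → Set Ω := fun k => {ω | I (-(k:ℤ)) ω = true ∧ I 0 ω = true ∧
      ∀ t : ℤ, 1 ≤ t → I t ω = false} with hR'
  have hLR : ∀ k, P (L k) = P (R k) := fun k => leftEq P I hI hID k
  have hLR' : ∀ k, P (L' k) = P (R' k) := fun k => rightEq P I hI hID k
  have hLmeas : ∀ k, MeasurableSet (L k) := fun k => measHelp hI _ _ _
  have hL'meas : ∀ k, MeasurableSet (L' k) := fun k => measHelp hI _ _ _
  -- disjointness
  have hLdisj : Pairwise (Function.onFun Disjoint L) := by
    intro j k hjk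
    rw [Function.onFun, Set.disjoint_left]
    intro ω hj hk
    simp only [hL, mem_setOf_eq] at hj hk
    rcases hjk.lt_or_gt with h | h
    · have hb := hj.2.2 (-(k:ℤ)) (by omega)
      rw [hk.1] at hb
      cases hb
    · have hb := hk.2.2 (-(j:ℤ)) (by omega)
      rw [hj.1] at hb
      cases hb
  have hL'disj : Pairwise (Function.onFun Disjoint L') := by
    intro j k hjk
    rw [Function.onFun, Set.disjoint_left]
    intro ω hj hk
    simp only [hL', mem_setOf_eq] at hj hk
    rcases hjk.lt_or_gt with h | h
    · have hb := hj.2.2 ((k:ℤ)) (by omega)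
      rw [hk.1] at hb
      cases hb
    · have hb := hk.2.2 ((j:ℤ)) (by omega)
      rw [hj.1] at hb
      cases hb
  have hsumR : ∑' k, P (R k) ≠ ⊤ := by
    have h1 : ∑' k, P (R k) = ∑' k, P (L k) := tsum_congr fun k => (hLR k).symm
    rw [h1, ← measure_iUnion hLdisj hLmeas]
    exact measure_ne_top _ _
  have hsumR' : ∑' k, P (R' k) ≠ ⊤ := by
    have h1 : ∑' k, P (R' k) = ∑' k, P (L' k) := tsum_congr fun k => (hLR' k).symm
    rw [h1, ← measure_iUnion hL'disj hL'meas]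
    exact measure_ne_top _ _
  -- Borel--Cantelli: null events
  have hnullE : P {ω | SplusFn I ω = ⊤ ∧ I 0 ω = true ∧ ∀ t : ℤ, t ≤ -1 → I t ω = false}
      = 0 := by
    have hsub : {ω | SplusFn I ω = ⊤ ∧ I 0 ω = true ∧ ∀ t : ℤ, t ≤ -1 → I t ω = false}
        ⊆ limsup R atTop := by
      intro ω hω
      rw [mem_limsup_iff_frequently_mem, frequently_atTop]
      intro K
      by_contra hcon
      push_neg at hcon
      have hinf : {t : ℤ | 0 < t ∧ I t ω = true}.Infinite := Set.encard_eq_top_iff.mp hω.1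
      have hfin : {t : ℤ | 0 < t ∧ I t ω = true} ⊆ Set.Ioo 0 (K:ℤ) := by
        rintro t ⟨ht, hIt⟩
        refine ⟨ht, ?_⟩
        by_contra hge
        push_neg at hge
        refine hcon t.toNat (by omega) ?_
        simp only [hR, mem_setOf_eq]
        refine ⟨?_, hω.2.1, hω.2.2⟩
        have hc : ((t.toNat : ℤ)) = t := by omega
        rwa [hc]
      exact hinf (Set.Finite.subset (Set.finite_Ioo _ _) hfin)
    refine le_antisymm ?_ (zero_le)
    calc P _ ≤ P (limsup R atTop) := measure_mono hsub
    _ = 0 := measure_limsup_atTop_eq_zero hsumR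
  have hnullD : P {ω | SminusFn I ω = ⊤ ∧ I 0 ω = true ∧ ∀ t : ℤ, 1 ≤ t → I t ω = false}
      = 0 := by
    have hsub : {ω | SminusFn I ω = ⊤ ∧ I 0 ω = true ∧ ∀ t : ℤ, 1 ≤ t → I t ω = false}
        ⊆ limsup R' atTop := by
      intro ω hω
      rw [mem_limsup_iff_frequently_mem, frequently_atTop]
      intro K
      by_contra hcon
      push_neg at hcon
      have hinf : {t : ℤ | t < 0 ∧ I t ω = true}.Infinite := Set.encard_eq_top_iff.mp hω.1
      have hfin : {t : ℤ | t < 0 ∧ I t ω = true} ⊆ Set.Ioo (-(K:ℤ)) 0 := by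
        rintro t ⟨ht, hIt⟩
        refine ⟨?_, ht⟩
        by_contra hge
        push_neg at hge
        refine hcon (-t).toNat (by omega) ?_
        simp only [hR', mem_setOf_eq]
        refine ⟨?_, hω.2.1, hω.2.2⟩
        have hc : (-(((-t).toNat : ℤ))) = t := by omega
        rwa [hc]
      exact hinf (Set.Finite.subset (Set.finite_Ioo _ _) hfin)
    refine le_antisymm ?_ (zero_le)
    calc P _ ≤ P (limsup R' atTop) := measure_mono hsub
    _ = 0 := measure_limsup_atTop_eq_zero hsumR'
  -- absorbing the almost sure event I₀ = 1
  have habs : ∀ s : Set Ω, P s ≤ P (s ∩ {ω | I 0 ω = true}) := by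
    intro s
    have hc : P {ω | I 0 ω = true}ᶜ = 0 := by
      rw [measure_compl (hms 0 true) (measure_ne_top _ _), hA0]
      simp
    calc P s ≤ P ((s ∩ {ω | I 0 ω = true}) ∪ {ω | I 0 ω = true}ᶜ) := by
          refine measure_mono fun ω hω => ?_
          by_cases h : I 0 ω = true
          · exact Or.inl ⟨hω, h⟩
          · exact Or.inr h
    _ ≤ P (s ∩ {ω | I 0 ω = true}) + P ({ω | I 0 ω = true}ᶜ) := measure_union_le _ _
    _ = P (s ∩ {ω | I 0 ω = true}) := by rw [hc, add_zero]
  -- direction (⟹)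
  have dir1 : 0 < P {ω | SplusFn I ω = 0} → 0 < P {ω | SiFn I ω ≠ ⊤} := by
    intro hθ
    rw [hSPset] at hθ
    set SP : Set Ω := {ω : Ω | ∀ t : ℤ, 1 ≤ t → I t ω = false} with hSP
    set s : Set Ω := SP ∩ {ω | I 0 ω = true} with hs
    have h1 : P SP ≤ P (s ∩ {ω | SminusFn I ω ≠ ⊤}) + P (s \ {ω | SminusFn I ω ≠ ⊤}) :=
      le_trans (habs SP) (measure_le_inter_add_diff _ _ _)
    have h2 : s \ {ω | SminusFn I ω ≠ ⊤}
        ⊆ {ω | SminusFn I ω = ⊤ ∧ I 0 ω = true ∧ ∀ t : ℤ, 1 ≤ t → I t ω = false} := by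
      rintro ω ⟨⟨hsp, h0⟩, hnt⟩
      simp only [mem_setOf_eq, not_not] at hnt
      exact ⟨hnt, h0, hsp⟩
    have h3 : s ∩ {ω | SminusFn I ω ≠ ⊤} ⊆ {ω | SiFn I ω ≠ ⊤} := by
      rintro ω ⟨⟨hsp, h0⟩, hnt⟩
      have hfin : {t : ℤ | t < 0 ∧ I t ω = true}.Finite := Set.encard_ne_top_iff.mp hnt
      refine (hSfin ω).mpr ?_
      refine Set.Finite.subset (hfin.union (Set.finite_singleton 0)) ?_
      intro t ht
      rcases lt_trichotomy t 0 with h | h | h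
      · exact Or.inl ⟨h, ht⟩
      · exact Or.inr (by simp [h])
      · exfalso
        have hb := hsp t (by omega)
        rw [ht] at hb
        cases hb
    calc (0:ℝ≥0∞) < P SP := hθ
    _ ≤ P (s ∩ {ω | SminusFn I ω ≠ ⊤}) + P (s \ {ω | SminusFn I ω ≠ ⊤}) := h1
    _ ≤ P {ω | SiFn I ω ≠ ⊤} + 0 :=
        add_le_add (measure_mono h3) (le_trans (measure_mono h2) hnullD.le)
    _ = P {ω | SiFn I ω ≠ ⊤} := by rw [add_zero]
  -- direction (⟸)
  have dir2 : 0 < P {ω | SiFn I ω ≠ ⊤} → 0 < P {ω | SplusFn I ω = 0} := by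
    intro hfin
    by_contra hP0
    push_neg at hP0
    have hz : P {ω | SplusFn I ω = 0} = 0 := le_antisymm hP0 (zero_le)
    have hRz : ∀ k, P (R' k) = 0 := by
      intro k
      refine le_antisymm ?_ (zero_le)
      have hsub : R' k ⊆ {ω | SplusFn I ω = 0} := by
        rw [hSPset]
        intro ω hω
        exact fun t ht => hω.2.2 t ht
      exact le_trans (measure_mono hsub) hz.le
    have hLz : ∀ k, P (L' k) = 0 := fun k => (hLR' k).trans (hRz k)
    have hsub2 : {ω | SiFn I ω ≠ ⊤} ∩ {ω | I 0 ω = true} ⊆ ⋃ k, L' k := by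
      rintro ω ⟨hf', h0⟩
      have hf : {t : ℤ | I t ω = true}.Finite := (hSfin ω).mp hf'
      have h0' : (0:ℤ) ∈ hf.toFinset := by
        rw [Set.Finite.mem_toFinset]
        exact h0
      have hnonempty : hf.toFinset.Nonempty := ⟨0, h0'⟩
      set a := hf.toFinset.max' hnonempty with ha
      have haI : I a ω = true := by
        have := hf.toFinset.max'_mem hnonempty
        rw [Set.Finite.mem_toFinset] at this
        exact this
      have ha0 : 0 ≤ a := hf.toFinset.le_max' 0 h0'
      refine mem_iUnion.mpr ⟨a.toNat, ?_⟩
      simp only [hL', mem_setOf_eq]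
      have hcast : ((a.toNat : ℤ)) = a := Int.toNat_of_nonneg ha0
      refine ⟨by rwa [hcast], h0, fun t ht => ?_⟩
      cases hb : I t ω
      · rfl
      · exfalso
        have hmem : t ∈ hf.toFinset := by
          rw [Set.Finite.mem_toFinset]
          exact hb
        have := hf.toFinset.le_max' t hmem
        omega
    have : P {ω | SiFn I ω ≠ ⊤} = 0 := by
      refine le_antisymm ?_ (zero_le)
      calc P {ω | SiFn I ω ≠ ⊤} ≤ P ({ω | SiFn I ω ≠ ⊤} ∩ {ω | I 0 ω = true}) := habs _
      _ ≤ P (⋃ k, L' k) := measure_mono hsub2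
      _ ≤ ∑' k, P (L' k) := measure_iUnion_le _
      _ = 0 := by simp [hLz]
    rw [this] at hfin
    exact lt_irrefl _ hfin
  refine ⟨⟨dir1, dir2⟩, ?_⟩
  -- the conditional statement
  intro hθ
  have hfin := dir1 hθ
  -- positivity of P(S₋ = 0)
  have hSMpos : 0 < P {ω | SminusFn I ω = 0} := by
    by_contra hP0
    push_neg at hP0
    have hz : P {ω | SminusFn I ω = 0} = 0 := le_antisymm hP0 (zero_le)
    have hRz : ∀ k, P (R k) = 0 := by
      intro k
      refine le_antisymm ?_ (zero_le)
      have hsub : R k ⊆ {ω | SminusFn I ω = 0} := by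
        rw [hSMset]
        intro ω hω
        exact fun t ht => hω.2.2 t ht
      exact le_trans (measure_mono hsub) hz.le
    have hLz : ∀ k, P (L k) = 0 := fun k => (hLR k).trans (hRz k)
    have hsub2 : {ω | SiFn I ω ≠ ⊤} ∩ {ω | I 0 ω = true} ⊆ ⋃ k, L k := by
      rintro ω ⟨hf', h0⟩
      have hf : {t : ℤ | I t ω = true}.Finite := (hSfin ω).mp hf'
      have h0' : (0:ℤ) ∈ hf.toFinset := by
        rw [Set.Finite.mem_toFinset]
        exact h0
      have hnonempty : hf.toFinset.Nonempty := ⟨0, h0'⟩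
      set a := hf.toFinset.min' hnonempty with ha
      have haI : I a ω = true := by
        have := hf.toFinset.min'_mem hnonempty
        rw [Set.Finite.mem_toFinset] at this
        exact this
      have ha0 : a ≤ 0 := hf.toFinset.min'_le 0 h0'
      refine mem_iUnion.mpr ⟨(-a).toNat, ?_⟩
      simp only [hL, mem_setOf_eq]
      have hcast : (-(((-a).toNat : ℤ))) = a := by omega
      refine ⟨by rwa [hcast], h0, fun t ht => ?_⟩
      cases hb : I t ω
      · rfl
      · exfalso
        have hmem : t ∈ hf.toFinset := by
          rw [Set.Finite.mem_toFinset]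
          exact hb
        have := hf.toFinset.min'_le t hmem
        omega
    have : P {ω | SiFn I ω ≠ ⊤} = 0 := by
      refine le_antisymm ?_ (zero_le)
      calc P {ω | SiFn I ω ≠ ⊤} ≤ P ({ω | SiFn I ω ≠ ⊤} ∩ {ω | I 0 ω = true}) := habs _
      _ ≤ P (⋃ k, L k) := measure_mono hsub2
      _ ≤ ∑' k, P (L k) := measure_iUnion_le _
      _ = 0 := by simp [hLz]
    rw [this] at hfin
    exact lt_irrefl _ hfin
  -- P(Sⁱ < ∞ ∩ S₋ = 0) = P(S₋ = 0)
  have hkey : P ({ω | SiFn I ω ≠ ⊤} ∩ {ω | SminusFn I ω = 0}) = P {ω | SminusFn I ω = 0} := by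
    refine le_antisymm (measure_mono inter_subset_right) ?_
    have hSMmem : ∀ ω : Ω, SminusFn I ω = 0 → ∀ t : ℤ, t ≤ -1 → I t ω = false := by
      intro ω hω
      exact hSMset.subset hω
    have h1 : P {ω : Ω | SminusFn I ω = 0} ≤
        P (({ω : Ω | SminusFn I ω = 0} ∩ {ω | I 0 ω = true}) ∩ {ω | SplusFn I ω ≠ ⊤})
        + P (({ω : Ω | SminusFn I ω = 0} ∩ {ω | I 0 ω = true}) \ {ω | SplusFn I ω ≠ ⊤}) :=
      le_trans (habs _) (measure_le_inter_add_diff _ _ _)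
    have h2 : ({ω : Ω | SminusFn I ω = 0} ∩ {ω | I 0 ω = true}) \ {ω | SplusFn I ω ≠ ⊤}
        ⊆ {ω | SplusFn I ω = ⊤ ∧ I 0 ω = true ∧ ∀ t : ℤ, t ≤ -1 → I t ω = false} := by
      rintro ω ⟨⟨hsm, h0⟩, hnt⟩
      simp only [mem_setOf_eq, not_not] at hnt
      exact ⟨hnt, h0, hSMmem ω hsm⟩
    have h3 : ({ω : Ω | SminusFn I ω = 0} ∩ {ω | I 0 ω = true}) ∩ {ω | SplusFn I ω ≠ ⊤}
        ⊆ {ω | SiFn I ω ≠ ⊤} ∩ {ω | SminusFn I ω = 0} := by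
      rintro ω ⟨⟨hsm, h0⟩, hnt⟩
      refine ⟨?_, hsm⟩
      have hfin' : {t : ℤ | 0 < t ∧ I t ω = true}.Finite := Set.encard_ne_top_iff.mp hnt
      refine (hSfin ω).mpr ?_
      refine Set.Finite.subset (hfin'.union (Set.finite_singleton 0)) ?_
      intro t ht
      rcases lt_trichotomy t 0 with h | h | h
      · exfalso
        have hb := hSMmem ω hsm t (by omega)
        rw [ht] at hb
        cases hb
      · exact Or.inr (by simp [h])
      · exact Or.inl ⟨h, ht⟩
    calc P {ω : Ω | SminusFn I ω = 0}
        ≤ P (({ω : Ω | SminusFn I ω = 0} ∩ {ω | I 0 ω = true}) ∩ {ω | SplusFn I ω ≠ ⊤})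
          + P (({ω : Ω | SminusFn I ω = 0} ∩ {ω | I 0 ω = true}) \ {ω | SplusFn I ω ≠ ⊤}) := h1
    _ ≤ P ({ω | SiFn I ω ≠ ⊤} ∩ {ω | SminusFn I ω = 0}) + 0 :=
        add_le_add (measure_mono h3) (le_trans (measure_mono h2) hnullE.le)
    _ = P ({ω | SiFn I ω ≠ ⊤} ∩ {ω | SminusFn I ω = 0}) := by rw [add_zero]
  rw [hkey]
  exact ENNReal.div_self hSMpos.ne' (measure_ne_top _ _)
end
end
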